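/- arXiv:2005.06794 — 12 statements merged into one kernel-verified Lean document; each statement's English description precedes it below -/
import Mathlib

section
/- Let f : ℝ → ℝ be smooth and let φ : ℝ² → ℝ be a smooth solution of the Hunter–Saxton equation, i.e. φ_{tx} + φ·φ_{xx} + (1/2)φ_x² = 0 on ℝ². Then the function ψ(t,x) := φ(t, x + f(t)) − f'(t) is also a smooth solution of the Hunter–Saxton equation on ℝ², i.e. ψ_{tx} + ψ·ψ_{xx} + (1/2)ψ_x² = 0 for all (t,x) ∈ ℝ². (This expresses that the vector fields Y_f = f(t)∂_x + f'(t)∂_u are point symmetries of the Hunter–Saxton equation.) -/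
open Real

/-- Partial derivative of a function of two real variables w.r.t. its first argument. -/
noncomputable def d1 (f : ℝ → ℝ → ℝ) (a b : ℝ) : ℝ := deriv (fun s => f s b) a

/-- Partial derivative of a function of two real variables w.r.t. its second argument. -/
noncomputable def d2 (f : ℝ → ℝ → ℝ) (a b : ℝ) : ℝ := deriv (fun s => f a s) b

/-- A function of two real variables is smooth (infinitely differentiable). -/
def Smooth2 (f : ℝ → ℝ → ℝ) : Prop := ContDiff ℝ (⊤ : ℕ∞) (fun p : ℝ × ℝ => f p.1 p.2)

private lemma aux_d2 {φ : ℝ → ℝ → ℝ} (hφ : Smooth2 φ) (a b : ℝ) :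
    HasDerivAt (fun s => φ a s) (fderiv ℝ (fun p : ℝ × ℝ => φ p.1 p.2) (a, b) (0, 1)) b := by
  have h1 : HasDerivAt (fun s : ℝ => ((a, s) : ℝ × ℝ)) (0, 1) b :=
    (hasDerivAt_const b a).prodMk (hasDerivAt_id b)
  have h2 : HasFDerivAt (fun p : ℝ × ℝ => φ p.1 p.2)
      (fderiv ℝ (fun p : ℝ × ℝ => φ p.1 p.2) (a, b)) (a, b) :=
    (hφ.differentiable (by simp) (a, b)).hasFDerivAt
  exact h2.comp_hasDerivAt b h1

private lemma aux_d1 {φ : ℝ → ℝ → ℝ} (hφ : Smooth2 φ) (a b : ℝ) :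
    HasDerivAt (fun s => φ s b) (fderiv ℝ (fun p : ℝ × ℝ => φ p.1 p.2) (a, b) (1, 0)) a := by
  have h1 : HasDerivAt (fun s : ℝ => ((s, b) : ℝ × ℝ)) (1, 0) a :=
    (hasDerivAt_id a).prodMk (hasDerivAt_const a b)
  have h2 : HasFDerivAt (fun p : ℝ × ℝ => φ p.1 p.2)
      (fderiv ℝ (fun p : ℝ × ℝ => φ p.1 p.2) (a, b)) (a, b) :=
    (hφ.differentiable (by simp) (a, b)).hasFDerivAt
  exact h2.comp_hasDerivAt a h1

private lemma d2_eq {φ : ℝ → ℝ → ℝ} (hφ : Smooth2 φ) (a b : ℝ) :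
    d2 φ a b = fderiv ℝ (fun p : ℝ × ℝ => φ p.1 p.2) (a, b) (0, 1) :=
  (aux_d2 hφ a b).deriv

private lemma d1_eq {φ : ℝ → ℝ → ℝ} (hφ : Smooth2 φ) (a b : ℝ) :
    d1 φ a b = fderiv ℝ (fun p : ℝ × ℝ => φ p.1 p.2) (a, b) (1, 0) :=
  (aux_d1 hφ a b).deriv

private lemma hasDerivAt_d2 {φ : ℝ → ℝ → ℝ} (hφ : Smooth2 φ) (a b : ℝ) :
    HasDerivAt (fun s => φ a s) (d2 φ a b) b := by
  rw [d2_eq hφ]; exact aux_d2 hφ a b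

private lemma smooth2_d2 {φ : ℝ → ℝ → ℝ} (hφ : Smooth2 φ) : Smooth2 (d2 φ) := by
  have heq : (fun p : ℝ × ℝ => d2 φ p.1 p.2)
      = fun p : ℝ × ℝ => fderiv ℝ (fun q : ℝ × ℝ => φ q.1 q.2) p (0, 1) := by
    funext p
    rw [d2_eq hφ p.1 p.2]
  rw [Smooth2, heq]
  exact ((contDiff_infty_iff_fderiv.mp hφ).2).clm_apply contDiff_const

/-- The vector fields `Y_f = f(t)∂_x + f'(t)∂_u` are point symmetries of the
Hunter–Saxton equation: if `φ` is a smooth solution, then so is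
`ψ(t,x) = φ(t, x + f(t)) − f'(t)`. -/
theorem hunterSaxton_point_symmetry
    (f : ℝ → ℝ) (hf : ContDiff ℝ (⊤ : ℕ∞) f)
    (φ : ℝ → ℝ → ℝ) (hφ : Smooth2 φ)
    (hsol : ∀ t x : ℝ,
      d1 (d2 φ) t x + φ t x * d2 (d2 φ) t x + (1/2) * (d2 φ t x)^2 = 0)
    (ψ : ℝ → ℝ → ℝ)
    (hψ : ∀ t x : ℝ, ψ t x = φ t (x + f t) - deriv f t) :
    Smooth2 ψ ∧ ∀ t x : ℝ,
      d1 (d2 ψ) t x + ψ t x * d2 (d2 ψ) t x + (1/2) * (d2 ψ t x)^2 = 0 := by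
  have hg : ContDiff ℝ (⊤ : ℕ∞) (deriv f) := (contDiff_infty_iff_deriv.mp hf).2
  have hfd : Differentiable ℝ f := hf.differentiable (by simp)
  have hψfun : ψ = fun t x => φ t (x + f t) - deriv f t := by
    funext t x; exact hψ t x
  have hmap : ContDiff ℝ (⊤ : ℕ∞) (fun p : ℝ × ℝ => ((p.1, p.2 + f p.1) : ℝ × ℝ)) :=
    contDiff_fst.prodMk (contDiff_snd.add (hf.comp contDiff_fst))
  have hΨ : Smooth2 ψ := by
    rw [hψfun, Smooth2]
    exact (hφ.comp hmap).sub (hg.comp contDiff_fst)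
  refine ⟨hΨ, fun t x => ?_⟩
  have hU : Smooth2 (d2 φ) := smooth2_d2 hφ
  -- Step 1: d2 ψ t x = d2 φ t (x + f t)
  have hd2ψ : ∀ t x : ℝ, d2 ψ t x = d2 φ t (x + f t) := by
    intro t x
    have h2 : HasDerivAt (fun s : ℝ => s + f t) 1 x := (hasDerivAt_id x).add_const _
    have h3 := (hasDerivAt_d2 hφ t (x + f t)).comp x h2
    have h4 : HasDerivAt (fun s => ψ t s) (d2 φ t (x + f t)) x := by
      have h5 := h3.sub_const (deriv f t)
      simp only [Function.comp, mul_one] at h5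
      have : (fun s => ψ t s) = fun s => φ t (s + f t) - deriv f t := by
        funext s; exact hψ t s
      rw [this]; exact h5
    exact h4.deriv
  -- Step 2: d2 (d2 ψ) t x = d2 (d2 φ) t (x + f t)
  have hd2d2 : d2 (d2 ψ) t x = d2 (d2 φ) t (x + f t) := by
    have h2 : HasDerivAt (fun s : ℝ => s + f t) 1 x := (hasDerivAt_id x).add_const _
    have h3 := (hasDerivAt_d2 hU t (x + f t)).comp x h2
    have h4 : HasDerivAt (fun s => d2 ψ t s) (d2 (d2 φ) t (x + f t)) x := by
      simp only [Function.comp, mul_one] at h3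
      have : (fun s => d2 ψ t s) = fun s => d2 φ t (s + f t) := by
        funext s; exact hd2ψ t s
      rw [this]; exact h3
    exact h4.deriv
  -- Step 3: d1 (d2 ψ) t x = d1 (d2 φ) t (x + f t) + deriv f t * d2 (d2 φ) t (x + f t)
  have hd1 : d1 (d2 ψ) t x
      = d1 (d2 φ) t (x + f t) + deriv f t * d2 (d2 φ) t (x + f t) := by
    have hcurve : HasDerivAt (fun s : ℝ => ((s, x + f s) : ℝ × ℝ)) (1, deriv f t) t :=
      (hasDerivAt_id t).prodMk ((hfd t).hasDerivAt.const_add x)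
    have hUd : HasFDerivAt (fun p : ℝ × ℝ => d2 φ p.1 p.2)
        (fderiv ℝ (fun p : ℝ × ℝ => d2 φ p.1 p.2) (t, x + f t)) (t, x + f t) :=
      (hU.differentiable (by simp) _).hasFDerivAt
    have h3 := hUd.comp_hasDerivAt t hcurve
    have hval : fderiv ℝ (fun p : ℝ × ℝ => d2 φ p.1 p.2) (t, x + f t) (1, deriv f t)
        = d1 (d2 φ) t (x + f t) + deriv f t * d2 (d2 φ) t (x + f t) := by
      have e : ((1, deriv f t) : ℝ × ℝ) = (1, 0) + deriv f t • (0, 1) := by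
        simp [Prod.ext_iff]
      rw [e, map_add, map_smul, d1_eq hU, d2_eq hU, smul_eq_mul]
    have h4 : HasDerivAt (fun s => d2 ψ s x)
        (d1 (d2 φ) t (x + f t) + deriv f t * d2 (d2 φ) t (x + f t)) t := by
      simp only [Function.comp_def] at h3
      rw [hval] at h3
      have : (fun s => d2 ψ s x) = fun s => d2 φ s (x + f s) := by
        funext s; exact hd2ψ s x
      rw [this]; exact h3
    exact h4.deriv
  rw [hd1, hd2d2, hd2ψ, hψ]
  linear_combination hsol t (x + f t)
end

section
/- Let U ⊆ ℝ² be open and let u : U → ℝ be a smooth solution of the Hunter–Saxton equation u_{tx} + u·u_{xx} + (1/2)u_x² = 0 on U. Let W ⊆ ℝ² be an open set containing {(t, u_x(t,x)) : (t,x) ∈ U} and let h : W → ℝ be smooth such that u_{xx}(t,x) = h(t, u_x(t,x)) for all (t,x) ∈ U. Then h satisfies the quotient equation of the Hunter–Saxton equation along the solution: for every (t,x) ∈ U, writing J = u_x(t,x), one has 2·∂₁h(t,J) − J²·∂₂h(t,J) + 4·J·h(t,J) = 0, where ∂₁h and ∂₂h denote the partial derivatives of h with respect to its first and second argument. -/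
open Real

/-- A function of two real variables is smooth on a set `U ⊆ ℝ²`. -/
def Smooth2On (f : ℝ → ℝ → ℝ) (U : Set (ℝ × ℝ)) : Prop :=
  ContDiffOn ℝ (⊤ : ℕ∞) (fun p : ℝ × ℝ => f p.1 p.2) U

/-- partial derivative in the first coordinate as a Fréchet directional derivative -/
lemma deriv_fst {f : ℝ × ℝ → ℝ} {p : ℝ × ℝ} (hf : DifferentiableAt ℝ f p) :
    deriv (fun s => f (s, p.2)) p.1 = fderiv ℝ f p (1, 0) := by
  have hline : HasDerivAt (fun s : ℝ => (s, p.2)) (((1 : ℝ), (0 : ℝ))) p.1 :=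
    (hasDerivAt_id p.1).prodMk (hasDerivAt_const p.1 p.2)
  exact (hf.hasFDerivAt.comp_hasDerivAt p.1 hline).deriv

/-- partial derivative in the second coordinate as a Fréchet directional derivative -/
lemma deriv_snd {f : ℝ × ℝ → ℝ} {p : ℝ × ℝ} (hf : DifferentiableAt ℝ f p) :
    deriv (fun s => f (p.1, s)) p.2 = fderiv ℝ f p (0, 1) := by
  have hline : HasDerivAt (fun s : ℝ => (p.1, s)) (((0 : ℝ), (1 : ℝ))) p.2 :=
    (hasDerivAt_const p.2 p.1).prodMk (hasDerivAt_id p.2)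
  exact (hf.hasFDerivAt.comp_hasDerivAt p.2 hline).deriv

/-- Along any smooth solution `u` of the Hunter–Saxton equation on an open set `U`,
a smooth function `h` with `u_{xx} = h(t, u_x)` satisfies the quotient equation
`2 h_I − J² h_J + 4 J h = 0` at `(I,J) = (t, u_x)`. -/
theorem hunterSaxton_quotient
    (U : Set (ℝ × ℝ)) (hU : IsOpen U)
    (u : ℝ → ℝ → ℝ) (hu : Smooth2On u U)
    (hsol : ∀ p ∈ U,
      d1 (d2 u) p.1 p.2 + u p.1 p.2 * d2 (d2 u) p.1 p.2 + (1/2) * (d2 u p.1 p.2)^2 = 0)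
    (W : Set (ℝ × ℝ)) (hW : IsOpen W)
    (hWsub : ∀ p ∈ U, (p.1, d2 u p.1 p.2) ∈ W)
    (h : ℝ → ℝ → ℝ) (hh : Smooth2On h W)
    (hcon : ∀ p ∈ U, d2 (d2 u) p.1 p.2 = h p.1 (d2 u p.1 p.2)) :
    ∀ p ∈ U,
      2 * d1 h p.1 (d2 u p.1 p.2) - (d2 u p.1 p.2)^2 * d2 h p.1 (d2 u p.1 p.2)
        + 4 * (d2 u p.1 p.2) * h p.1 (d2 u p.1 p.2) = 0 := by
  have hm : ((⊤ : ℕ∞) : WithTop ℕ∞) + 1 ≤ ((⊤ : ℕ∞) : WithTop ℕ∞) := by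
    exact le_of_eq rfl
  have h1 : (1 : WithTop ℕ∞) ≤ ((⊤ : ℕ∞) : WithTop ℕ∞) := by
    exact_mod_cast le_top
  have h2 : (2 : WithTop ℕ∞) ≤ ((⊤ : ℕ∞) : WithTop ℕ∞) := by
    rw [show ((2 : WithTop ℕ∞)) = ((2 : ℕ∞) : WithTop ℕ∞) from rfl, WithTop.coe_le_coe]
    exact le_top
  set F : ℝ × ℝ → ℝ := fun q => u q.1 q.2 with hFdef
  have hF : ContDiffOn ℝ (⊤ : ℕ∞) F U := hu
  set g : ℝ × ℝ → ℝ := fun q => fderiv ℝ F q (0, 1) with hgdef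
  have hgC : ContDiffOn ℝ (⊤ : ℕ∞) g U :=
    (hF.fderiv_of_isOpen hU hm).clm_apply contDiffOn_const
  have hDgC : ContDiffOn ℝ (⊤ : ℕ∞) (fderiv ℝ g) U := hgC.fderiv_of_isOpen hU hm
  have hFd : ∀ q ∈ U, DifferentiableAt ℝ F q := fun q hq =>
    (hF.contDiffAt (hU.mem_nhds hq)).differentiableAt (by simp)
  have hgd : ∀ q ∈ U, DifferentiableAt ℝ g q := fun q hq =>
    (hgC.contDiffAt (hU.mem_nhds hq)).differentiableAt (by simp)
  have hDgd : ∀ q ∈ U, DifferentiableAt ℝ (fderiv ℝ g) q := fun q hq =>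
    (hDgC.contDiffAt (hU.mem_nhds hq)).differentiableAt (by simp)
  -- translation lemmas
  have T1 : ∀ q ∈ U, d2 u q.1 q.2 = g q := fun q hq => deriv_snd (hFd q hq)
  have Ev2 : ∀ q ∈ U, ∀ᶠ s in nhds q.2, (q.1, s) ∈ U := fun q hq =>
    (Continuous.prodMk_right q.1).continuousAt.preimage_mem_nhds (hU.mem_nhds hq)
  have Ev1 : ∀ q ∈ U, ∀ᶠ s in nhds q.1, (s, q.2) ∈ U := fun q hq =>
    (continuous_id.prodMk continuous_const).continuousAt.preimage_mem_nhds (hU.mem_nhds hq)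
  have T2 : ∀ q ∈ U, d2 (d2 u) q.1 q.2 = fderiv ℝ g q (0, 1) := by
    intro q hq
    have he : (fun s => d2 u q.1 s) =ᶠ[nhds q.2] (fun s => g (q.1, s)) := by
      filter_upwards [Ev2 q hq] with s hs
      exact T1 (q.1, s) hs
    show deriv (fun s => d2 u q.1 s) q.2 = _
    rw [he.deriv_eq]
    exact deriv_snd (hgd q hq)
  have T3 : ∀ q ∈ U, d1 (d2 u) q.1 q.2 = fderiv ℝ g q (1, 0) := by
    intro q hq
    have he : (fun s => d2 u s q.2) =ᶠ[nhds q.1] (fun s => g (s, q.2)) := by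
      filter_upwards [Ev1 q hq] with s hs
      exact T1 (s, q.2) hs
    show deriv (fun s => d2 u s q.2) q.1 = _
    rw [he.deriv_eq]
    exact deriv_fst (hgd q hq)
  -- the PDE and the constraint in terms of F and g
  have hsol' : ∀ q ∈ U,
      fderiv ℝ g q (1, 0) + F q * fderiv ℝ g q (0, 1) + (1/2) * (g q)^2 = 0 := by
    intro q hq
    have := hsol q hq
    rw [T1 q hq, T2 q hq, T3 q hq] at this
    exact this
  set hh2 : ℝ × ℝ → ℝ := fun q => h q.1 q.2 with hhdef
  have hcon' : ∀ q ∈ U, fderiv ℝ g q (0, 1) = hh2 (q.1, g q) := by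
    intro q hq
    have := hcon q hq
    rw [T1 q hq, T2 q hq] at this
    exact this
  -- main computation at a point p
  intro p hp
  have hWp : (p.1, g p) ∈ W := by
    have := hWsub p hp
    rwa [T1 p hp] at this
  have hhd : DifferentiableAt ℝ hh2 (p.1, g p) :=
    (hh.contDiffAt (hW.mem_nhds hWp)).differentiableAt (by simp)
  have hsymm : fderiv ℝ (fderiv ℝ g) p ((0:ℝ), (1:ℝ)) ((1:ℝ), (0:ℝ)) =
      fderiv ℝ (fderiv ℝ g) p ((1:ℝ), (0:ℝ)) ((0:ℝ), (1:ℝ)) :=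
    (hgC.contDiffAt (hU.mem_nhds hp)).isSymmSndFDerivAt (by simpa using h2) _ _
  have line2 : HasDerivAt (fun s : ℝ => (p.1, s)) (((0 : ℝ), (1 : ℝ))) p.2 :=
    (hasDerivAt_const p.2 p.1).prodMk (hasDerivAt_id p.2)
  have line1 : HasDerivAt (fun s : ℝ => (s, p.2)) (((1 : ℝ), (0 : ℝ))) p.1 :=
    (hasDerivAt_id p.1).prodMk (hasDerivAt_const p.1 p.2)
  -- derivatives of the directional derivatives of g along lines
  have hPsi2 : ∀ e : ℝ × ℝ, HasDerivAt (fun s => fderiv ℝ g (p.1, s) e)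
      (fderiv ℝ (fderiv ℝ g) p ((0:ℝ), (1:ℝ)) e) p.2 := by
    intro e
    have hA : HasFDerivAt (fun q => fderiv ℝ g q e)
        ((ContinuousLinearMap.apply ℝ ℝ e).comp (fderiv ℝ (fderiv ℝ g) p)) p :=
      (ContinuousLinearMap.apply ℝ ℝ e).hasFDerivAt.comp p (hDgd p hp).hasFDerivAt
    exact hA.comp_hasDerivAt p.2 line2
  have hPsi1 : ∀ e : ℝ × ℝ, HasDerivAt (fun s => fderiv ℝ g (s, p.2) e)
      (fderiv ℝ (fderiv ℝ g) p ((1:ℝ), (0:ℝ)) e) p.1 := by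
    intro e
    have hA : HasFDerivAt (fun q => fderiv ℝ g q e)
        ((ContinuousLinearMap.apply ℝ ℝ e).comp (fderiv ℝ (fderiv ℝ g) p)) p :=
      (ContinuousLinearMap.apply ℝ ℝ e).hasFDerivAt.comp p (hDgd p hp).hasFDerivAt
    exact hA.comp_hasDerivAt p.1 line1
  -- derivatives of g and F along lines
  have hgl2 : HasDerivAt (fun s => g (p.1, s)) (fderiv ℝ g p (0, 1)) p.2 :=
    (hgd p hp).hasFDerivAt.comp_hasDerivAt_of_eq p.2 line2 rfl
  have hgl1 : HasDerivAt (fun s => g (s, p.2)) (fderiv ℝ g p (1, 0)) p.1 :=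
    (hgd p hp).hasFDerivAt.comp_hasDerivAt_of_eq p.1 line1 rfl
  have hFl2 : HasDerivAt (fun s => F (p.1, s)) (g p) p.2 :=
    (hFd p hp).hasFDerivAt.comp_hasDerivAt_of_eq p.2 line2 rfl
  -- notation
  set D := fderiv ℝ (fderiv ℝ g) p with hDdef
  set J := g p with hJdef
  set Hv := fderiv ℝ g p ((0:ℝ), (1:ℝ)) with hHvdef
  set Sv := fderiv ℝ g p ((1:ℝ), (0:ℝ)) with hSvdef
  -- E1 : differentiate the PDE in the x-direction
  have E1 : D (0,1) (1,0) + (J * Hv + F p * (D (0,1) (0,1)))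
      + (1/2) * (2 * J ^ 1 * Hv) = 0 := by
    have hprod : HasDerivAt (fun s => fderiv ℝ g (p.1, s) (1, 0)
        + F (p.1, s) * fderiv ℝ g (p.1, s) (0, 1) + (1/2) * (g (p.1, s))^2)
        (D (0,1) (1,0) + (J * Hv + F p * (D (0,1) (0,1)))
          + (1/2) * (2 * J ^ 1 * Hv)) p.2 :=
      ((hPsi2 (1,0)).add ((hFl2.mul (hPsi2 (0,1))))).add ((hgl2.pow 2).const_mul (1/2))
    have hzero : (fun s => fderiv ℝ g (p.1, s) (1, 0)
        + F (p.1, s) * fderiv ℝ g (p.1, s) (0, 1) + (1/2) * (g (p.1, s))^2)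
        =ᶠ[nhds p.2] (fun _ => (0:ℝ)) := by
      filter_upwards [Ev2 p hp] with s hs
      exact hsol' (p.1, s) hs
    have := hprod.deriv
    rw [hzero.deriv_eq, deriv_const] at this
    linarith [this]
  -- E2 : differentiate the constraint in the x-direction
  have E2 : D (0,1) (0,1) = Hv * fderiv ℝ hh2 (p.1, J) ((0:ℝ), (1:ℝ)) := by
    have hlhs : HasDerivAt (fun s => fderiv ℝ g (p.1, s) (0, 1)) (D (0,1) (0,1)) p.2 :=
      hPsi2 (0,1)
    have hrhs : HasDerivAt (fun s => hh2 (p.1, g (p.1, s)))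
        (fderiv ℝ hh2 (p.1, J) ((0:ℝ), Hv)) p.2 :=
      hhd.hasFDerivAt.comp_hasDerivAt_of_eq p.2 ((hasDerivAt_const p.2 p.1).prodMk hgl2) rfl
    have he : (fun s => fderiv ℝ g (p.1, s) (0, 1))
        =ᶠ[nhds p.2] (fun s => hh2 (p.1, g (p.1, s))) := by
      filter_upwards [Ev2 p hp] with s hs
      exact hcon' (p.1, s) hs
    have heq := hlhs.deriv
    rw [he.deriv_eq, hrhs.deriv] at heq
    have hvec : ((0:ℝ), Hv) = Hv • (((0:ℝ), (1:ℝ)) : ℝ × ℝ) := by simp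
    rw [← heq, hvec, (fderiv ℝ hh2 (p.1, J)).map_smul]
    rfl
  -- E3 : differentiate the constraint in the t-direction
  have E3 : D (1,0) (0,1) = fderiv ℝ hh2 (p.1, J) ((1:ℝ), (0:ℝ))
      + Sv * fderiv ℝ hh2 (p.1, J) ((0:ℝ), (1:ℝ)) := by
    have hlhs : HasDerivAt (fun s => fderiv ℝ g (s, p.2) (0, 1)) (D (1,0) (0,1)) p.1 :=
      hPsi1 (0,1)
    have hrhs : HasDerivAt (fun s => hh2 (s, g (s, p.2)))
        (fderiv ℝ hh2 (p.1, J) ((1:ℝ), Sv)) p.1 :=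
      hhd.hasFDerivAt.comp_hasDerivAt_of_eq p.1 ((hasDerivAt_id p.1).prodMk hgl1) rfl
    have he : (fun s => fderiv ℝ g (s, p.2) (0, 1))
        =ᶠ[nhds p.1] (fun s => hh2 (s, g (s, p.2))) := by
      filter_upwards [Ev1 p hp] with s hs
      exact hcon' (s, p.2) hs
    have heq := hlhs.deriv
    rw [he.deriv_eq, hrhs.deriv] at heq
    have hvec : ((1:ℝ), Sv) = (((1:ℝ), (0:ℝ)) : ℝ × ℝ) + Sv • (((0:ℝ), (1:ℝ)) : ℝ × ℝ) := by
      simp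
    rw [← heq, hvec, (fderiv ℝ hh2 (p.1, J)).map_add, (fderiv ℝ hh2 (p.1, J)).map_smul]
    rfl
  -- E4 : the PDE at p itself
  have E4 : Sv + F p * Hv + (1/2) * J^2 = 0 := hsol' p hp
  -- the constraint at p itself
  have E5 : Hv = h p.1 J := hcon' p hp
  -- translate the goal
  rw [T1 p hp]
  have Td1 : d1 h p.1 (g p) = fderiv ℝ hh2 (p.1, J) ((1:ℝ), (0:ℝ)) := deriv_fst hhd
  have Td2 : d2 h p.1 (g p) = fderiv ℝ hh2 (p.1, J) ((0:ℝ), (1:ℝ)) := deriv_snd hhd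
  rw [Td1, Td2]
  set d1h := fderiv ℝ hh2 (p.1, J) ((1:ℝ), (0:ℝ)) with hd1h
  set d2h := fderiv ℝ hh2 (p.1, J) ((0:ℝ), (1:ℝ)) with hd2h
  rw [hsymm, E3, E2] at E1
  have hJ : h p.1 J = Hv := E5.symm
  rw [hJ]
  linear_combination 2 * E1 - 2 * d2h * E4
end

section
/- Let g : ℝ → ℝ be smooth and nowhere vanishing. Define h(I,J) := (2 − I·J)⁴ / (16·g(2J/(2 − I·J))) on the open set Ω = {(I,J) ∈ ℝ² : 2 − I·J ≠ 0}. Then h is a solution of the quotient equation of the Hunter–Saxton equation: 2·∂_I h(I,J) − J²·∂_J h(I,J) + 4·J·h(I,J) = 0 for all (I,J) ∈ Ω. -/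
open Real

/-- For any smooth nowhere-vanishing `g`, the function
`h(I,J) = (2 − IJ)⁴ / (16 g(2J/(2−IJ)))` solves the quotient equation of the
Hunter–Saxton equation, `2 h_I − J² h_J + 4 J h = 0`, on `Ω = {2 − IJ ≠ 0}`. -/
theorem hunterSaxton_quotient_general_solution
    (g : ℝ → ℝ) (hg : ContDiff ℝ (⊤ : ℕ∞) g) (hg0 : ∀ w : ℝ, g w ≠ 0)
    (h : ℝ → ℝ → ℝ)
    (hdef : ∀ I J : ℝ, 2 - I * J ≠ 0 →
      h I J = (2 - I * J)^4 / (16 * g (2 * J / (2 - I * J)))) :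
    ∀ I J : ℝ, 2 - I * J ≠ 0 →
      2 * d1 h I J - J^2 * d2 h I J + 4 * J * h I J = 0 := by
  intro I J hc
  set c := 2 - I * J with hcdef
  set w := 2 * J / c with hwdef
  have hG : g w ≠ 0 := hg0 w
  have hgd : ∀ x : ℝ, HasDerivAt g (deriv g x) x :=
    fun x => (hg.differentiable (by norm_num) x).hasDerivAt
  -- derivative in I
  have hD1 : HasDerivAt (fun s : ℝ => 2 - s * J) (-J) I := by
    simpa using ((hasDerivAt_id I).mul_const J).const_sub 2
  have hu1 : HasDerivAt (fun s : ℝ => 2 * J / (2 - s * J))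
      ((0 * c - 2 * J * (-J)) / c ^ 2) I := by
    exact (hasDerivAt_const I (2 * J)).div hD1 hc
  have hnum1 : HasDerivAt (fun s : ℝ => (2 - s * J) ^ 4)
      (4 * c ^ 3 * (-J)) I := by
    simpa [hcdef] using (hD1.fun_pow 4)
  have hden1 : HasDerivAt (fun s : ℝ => 16 * g (2 * J / (2 - s * J)))
      (16 * (deriv g w * ((0 * c - 2 * J * (-J)) / c ^ 2))) I :=
    ((hgd w).comp I hu1).const_mul 16
  have hden1ne : 16 * g w ≠ 0 := by positivity
  have hH1 : HasDerivAt (fun s : ℝ => (2 - s * J) ^ 4 / (16 * g (2 * J / (2 - s * J))))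
      ((4 * c ^ 3 * (-J) * (16 * g w) -
        c ^ 4 * (16 * (deriv g w * ((0 * c - 2 * J * (-J)) / c ^ 2)))) / (16 * g w) ^ 2) I :=
    hnum1.div hden1 hden1ne
  -- derivative in J
  have hD2 : HasDerivAt (fun s : ℝ => 2 - I * s) (-I) J := by
    simpa using ((hasDerivAt_id J).const_mul I).const_sub 2
  have hnumJ : HasDerivAt (fun s : ℝ => 2 * s) 2 J := by
    simpa using (hasDerivAt_id J).const_mul 2
  have hu2 : HasDerivAt (fun s : ℝ => 2 * s / (2 - I * s))
      ((2 * c - 2 * J * (-I)) / c ^ 2) J :=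
    hnumJ.div hD2 hc
  have hnum2 : HasDerivAt (fun s : ℝ => (2 - I * s) ^ 4)
      (4 * c ^ 3 * (-I)) J := by
    simpa [hcdef] using (hD2.fun_pow 4)
  have hden2 : HasDerivAt (fun s : ℝ => 16 * g (2 * s / (2 - I * s)))
      (16 * (deriv g w * ((2 * c - 2 * J * (-I)) / c ^ 2))) J :=
    ((hgd w).comp J hu2).const_mul 16
  have hH2 : HasDerivAt (fun s : ℝ => (2 - I * s) ^ 4 / (16 * g (2 * s / (2 - I * s))))
      ((4 * c ^ 3 * (-I) * (16 * g w) -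
        c ^ 4 * (16 * (deriv g w * ((2 * c - 2 * J * (-I)) / c ^ 2)))) / (16 * g w) ^ 2) J :=
    hnum2.div hden2 hden1ne
  -- transfer to h via local equality
  have hopen1 : IsOpen {s : ℝ | 2 - s * J ≠ 0} :=
    isOpen_ne.preimage (by continuity)
  have hev1 : (fun s => h s J) =ᶠ[nhds I]
      (fun s : ℝ => (2 - s * J) ^ 4 / (16 * g (2 * J / (2 - s * J)))) := by
    filter_upwards [hopen1.mem_nhds (by exact hc : (2 : ℝ) - I * J ≠ 0)] with s hs
    exact hdef s J hs
  have hopen2 : IsOpen {s : ℝ | 2 - I * s ≠ 0} :=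
    isOpen_ne.preimage (by continuity)
  have hev2 : (fun s => h I s) =ᶠ[nhds J]
      (fun s : ℝ => (2 - I * s) ^ 4 / (16 * g (2 * s / (2 - I * s)))) := by
    filter_upwards [hopen2.mem_nhds (by exact hc : (2 : ℝ) - I * J ≠ 0)] with s hs
    exact hdef I s hs
  have hd1 : d1 h I J = (4 * c ^ 3 * (-J) * (16 * g w) -
        c ^ 4 * (16 * (deriv g w * ((0 * c - 2 * J * (-J)) / c ^ 2)))) / (16 * g w) ^ 2 := by
    rw [d1, hev1.deriv_eq, hH1.deriv]
  have hd2 : d2 h I J = (4 * c ^ 3 * (-I) * (16 * g w) -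
        c ^ 4 * (16 * (deriv g w * ((2 * c - 2 * J * (-I)) / c ^ 2)))) / (16 * g w) ^ 2 := by
    rw [d2, hev2.deriv_eq, hH2.deriv]
  rw [hd1, hd2, hdef I J hc, ← hcdef, ← hwdef]
  have hc2 : c ^ 2 ≠ 0 := pow_ne_zero 2 hc
  field_simp
  ring
end

section
/- (Hunter–Saxton) Let α, β, γ : ℝ → ℝ be smooth functions with β'(ξ) = (1/2)·α'(ξ)² for all ξ. Define X(t,ξ) := ξ + t·α(ξ) + (t²/2)·β(ξ) + γ(t). Let V ⊆ ℝ² be open with ∂X/∂ξ(t,ξ) ≠ 0 for all (t,ξ) ∈ V, let U ⊆ ℝ² be open, and suppose Φ(t,ξ) := (t, X(t,ξ)) is a bijection from V onto U. If u : U → ℝ is a smooth function satisfying u(t, X(t,ξ)) = α(ξ) + t·β(ξ) + γ'(t) for all (t,ξ) ∈ V, then u is a solution of the Hunter–Saxton equation on U: u_{tx} + u·u_{xx} + (1/2)u_x² = 0 for all (t,x) ∈ U. -/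
open Real

lemma deriv2_eq (F : ℝ × ℝ → ℝ) (a b : ℝ) (h : DifferentiableAt ℝ F (a, b)) :
    deriv (fun s => F (a, s)) b = fderiv ℝ F (a, b) (0, 1) := by
  have hc : HasDerivAt (fun s : ℝ => ((a, s) : ℝ × ℝ)) (0, 1) b :=
    (hasDerivAt_const b a).prodMk (hasDerivAt_id b)
  exact (h.hasFDerivAt.comp_hasDerivAt b hc).deriv

lemma deriv1_eq (F : ℝ × ℝ → ℝ) (a b : ℝ) (h : DifferentiableAt ℝ F (a, b)) :
    deriv (fun s => F (s, b)) a = fderiv ℝ F (a, b) (1, 0) := by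
  have hc : HasDerivAt (fun s : ℝ => ((s, b) : ℝ × ℝ)) (1, 0) a :=
    (hasDerivAt_id a).prodMk (hasDerivAt_const a b)
  exact (h.hasFDerivAt.comp_hasDerivAt a hc).deriv

/-- The Hunter–Saxton implicit parametric formula: if `u(t, X(t,ξ)) = α(ξ) + tβ(ξ) + γ'(t)`
with `X(t,ξ) = ξ + tα(ξ) + (t²/2)β(ξ) + γ(t)`, `β' = (1/2)(α')²`, and `Φ(t,ξ) = (t, X(t,ξ))`
a bijection from `V` onto `U` with `∂X/∂ξ ≠ 0` on `V`, then `u` solves the Hunter–Saxton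
equation on `U`. -/
theorem hunterSaxton_general_solution
    (α β γ : ℝ → ℝ)
    (hα : ContDiff ℝ (⊤ : ℕ∞) α) (hβ : ContDiff ℝ (⊤ : ℕ∞) β)
    (hγ : ContDiff ℝ (⊤ : ℕ∞) γ)
    (hβ' : ∀ ξ : ℝ, deriv β ξ = (1/2) * (deriv α ξ)^2)
    (X : ℝ → ℝ → ℝ)
    (hX : ∀ t ξ : ℝ, X t ξ = ξ + t * α ξ + (t^2/2) * β ξ + γ t)
    (V U : Set (ℝ × ℝ)) (hV : IsOpen V) (hUo : IsOpen U)
    (hXξ : ∀ p ∈ V, d2 X p.1 p.2 ≠ 0)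
    (hbij : Set.BijOn (fun p : ℝ × ℝ => (p.1, X p.1 p.2)) V U)
    (u : ℝ → ℝ → ℝ) (hu : Smooth2On u U)
    (huX : ∀ p ∈ V, u p.1 (X p.1 p.2) = α p.2 + p.1 * β p.2 + deriv γ p.1) :
    ∀ p ∈ U,
      d1 (d2 u) p.1 p.2 + u p.1 p.2 * d2 (d2 u) p.1 p.2 + (1/2) * (d2 u p.1 p.2)^2 = 0 := by
  classical
  set F : ℝ × ℝ → ℝ := fun p => u p.1 p.2 with hFdef
  have hF : ContDiffOn ℝ (⊤ : ℕ∞) F U := hu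
  set G : ℝ × ℝ → ℝ := fun p => fderiv ℝ F p (0, 1) with hGdef
  have hG : ContDiffOn ℝ (⊤ : ℕ∞) G U :=
    (hF.fderiv_of_isOpen hUo (by simp)).clm_apply contDiffOn_const
  have hFdiff : ∀ p ∈ U, DifferentiableAt ℝ F p := fun p hp =>
    (hF.contDiffAt (hUo.mem_nhds hp)).differentiableAt (by simp)
  have hGdiff : ∀ p ∈ U, DifferentiableAt ℝ G p := fun p hp =>
    (hG.contDiffAt (hUo.mem_nhds hp)).differentiableAt (by simp)
  -- `d2 u = G` on `U`
  have hd2 : ∀ a b : ℝ, (a, b) ∈ U → d2 u a b = G (a, b) := by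
    intro a b h
    exact deriv2_eq F a b (hFdiff _ h)
  -- derivative of `X t ·`
  have hXs : ∀ t ξ : ℝ,
      HasDerivAt (fun s => X t s)
        (1 + t * deriv α ξ + (t^2/2) * ((1/2) * (deriv α ξ)^2)) ξ := by
    intro t ξ
    have h0 : (fun s => X t s) = fun s => s + t * α s + (t^2/2) * β s + γ t :=
      funext (hX t)
    rw [h0]
    have hα' := (hα.differentiable (by simp) ξ).hasDerivAt
    have hβ'' := (hβ.differentiable (by simp) ξ).hasDerivAt
    have h1 : HasDerivAt (fun s => s + t * α s + (t^2/2) * β s + γ t)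
        (1 + t * deriv α ξ + (t^2/2) * deriv β ξ) ξ :=
      (((hasDerivAt_id ξ).add (hα'.const_mul t)).add (hβ''.const_mul (t^2/2))).add_const (γ t)
    rwa [hβ' ξ] at h1
  -- key formula A: `u_x` along the parametrization
  have keyA : ∀ t ξ : ℝ, (t, ξ) ∈ V →
      G (t, X t ξ) = deriv α ξ / (1 + t * deriv α ξ / 2) := by
    intro t ξ hr
    set a := deriv α ξ with ha
    set g := 1 + t * a / 2 with hgdef
    have hU1 : (t, X t ξ) ∈ U := hbij.mapsTo hr
    have hD := hXs t ξ
    have hDne : (1 + t * a + (t^2/2) * ((1/2) * a^2)) ≠ 0 := by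
      have h' := hXξ (t, ξ) hr
      simpa [d2, hD.deriv] using h'
    have hg : g ≠ 0 := by
      intro h
      apply hDne
      have h2 : (1 + t * a + (t^2/2) * ((1/2) * a^2)) = g^2 := by rw [hgdef]; ring
      rw [h2, h]; ring
    have hcurve : HasDerivAt (fun s : ℝ => ((t, X t s) : ℝ × ℝ))
        (0, 1 + t * a + (t^2/2) * ((1/2) * a^2)) ξ := (hasDerivAt_const ξ t).prodMk hD
    have h1 : HasDerivAt (fun s => F (t, X t s))
        (fderiv ℝ F (t, X t ξ) (0, 1 + t * a + (t^2/2) * ((1/2) * a^2))) ξ :=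
      by have := (hFdiff _ hU1).hasFDerivAt.comp_hasDerivAt ξ hcurve; exact this
    have h2 : HasDerivAt (fun s => α s + t * β s + deriv γ t)
        (a + t * ((1/2) * a^2)) ξ := by
      have hα' := (hα.differentiable (by simp) ξ).hasDerivAt
      have hβ'' := (hβ.differentiable (by simp) ξ).hasDerivAt
      have := ((hα'.add (hβ''.const_mul t)).add_const (deriv γ t))
      rw [hβ' ξ] at this
      convert this using 2
      all_goals rfl
    have hev : (fun s => F (t, X t s)) =ᶠ[nhds ξ] (fun s => α s + t * β s + deriv γ t) := by
      have hopen : IsOpen {s : ℝ | (t, s) ∈ V} :=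
        hV.preimage (continuous_const.prodMk continuous_id)
      filter_upwards [hopen.mem_nhds hr] with s hs
      exact huX (t, s) hs
    have h2' : HasDerivAt (fun s => F (t, X t s)) (a + t * ((1/2) * a^2)) ξ :=
      h2.congr_of_eventuallyEq hev
    have hEq := h1.unique h2'
    have hval : fderiv ℝ F (t, X t ξ) (0, 1 + t * a + (t^2/2) * ((1/2) * a^2))
        = (1 + t * a + (t^2/2) * ((1/2) * a^2)) * G (t, X t ξ) := by
      have hsm : ((0:ℝ), 1 + t * a + (t^2/2) * ((1/2) * a^2))
          = (1 + t * a + (t^2/2) * ((1/2) * a^2)) • ((0:ℝ), (1:ℝ)) := by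
        simp [Prod.smul_mk]
      rw [hsm, map_smul, smul_eq_mul]
    rw [hval] at hEq
    have hGg2 : G (t, X t ξ) * g * g = a * g := by
      have h3 : (1 + t * a + (t^2/2) * ((1/2) * a^2)) * G (t, X t ξ) = G (t, X t ξ) * g * g := by
        rw [hgdef]; ring
      have h4 : a + t * ((1/2) * a^2) = a * g := by rw [hgdef]; ring
      rw [← h3, ← h4, hEq]
    rw [eq_div_iff hg]
    exact mul_right_cancel₀ hg hGg2
  -- main argument
  intro p hp
  obtain ⟨q, hqV, hqp⟩ := hbij.surjOn hp
  obtain ⟨t0, ξ0⟩ := q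
  simp only at hqp
  set a := deriv α ξ0 with ha
  set g := 1 + t0 * a / 2 with hgdef
  set w := α ξ0 + t0 * β ξ0 + deriv γ t0 with hwdef
  have hp1 : p.1 = t0 := by rw [← hqp]
  have hp2 : p.2 = X t0 ξ0 := by rw [← hqp]
  have hpe : ((t0, X t0 ξ0) : ℝ × ℝ) = p := hqp
  -- g ≠ 0
  have hDne : (1 + t0 * a + (t0^2/2) * ((1/2) * a^2)) ≠ 0 := by
    have h' := hXξ (t0, ξ0) hqV
    simpa [d2, (hXs t0 ξ0).deriv] using h'
  have hg : g ≠ 0 := by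
    intro h
    apply hDne
    have h2 : (1 + t0 * a + (t0^2/2) * ((1/2) * a^2)) = g^2 := by rw [hgdef]; ring
    rw [h2, h]; ring
  -- derivative of `X · ξ0`
  have hXt : HasDerivAt (fun t => X t ξ0) w t0 := by
    have h0 : (fun t => X t ξ0) = fun t => ξ0 + t * α ξ0 + (t^2/2) * β ξ0 + γ t :=
      funext (fun t => hX t ξ0)
    rw [h0]
    have hsq : HasDerivAt (fun t : ℝ => t^2/2 * β ξ0) (t0 * β ξ0) t0 := by
      have := ((hasDerivAt_pow 2 t0).div_const 2).mul_const (β ξ0)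
      convert this using 1; rfl; rfl; ring
    have hγ' := (hγ.differentiable (by simp) t0).hasDerivAt
    have := ((((hasDerivAt_const t0 ξ0).add ((hasDerivAt_id t0).mul_const (α ξ0))).add
      hsq).add hγ')
    convert this using 1
    rfl; rfl; rfl
    rw [hwdef]; ring
  -- derivative of LHS in t
  have hB1 : HasDerivAt (fun t => G (t, X t ξ0)) (fderiv ℝ G p (1, w)) t0 := by
    have hcurve : HasDerivAt (fun t : ℝ => ((t, X t ξ0) : ℝ × ℝ)) (1, w) t0 :=
      (hasDerivAt_id t0).prodMk hXt
    have hd := hGdiff p hp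
    rw [← hpe] at hd
    have h2 := hd.hasFDerivAt.comp_hasDerivAt t0 hcurve
    simp [Function.comp, hpe] at h2
    exact h2
  -- derivative of RHS in t
  have hB2 : HasDerivAt (fun t => a / (1 + t * a / 2)) (-(a^2/2)/g^2) t0 := by
    have hden : HasDerivAt (fun t : ℝ => 1 + t * a / 2) (a/2) t0 := by
      have := (((hasDerivAt_id t0).mul_const a).div_const 2).const_add 1
      convert this using 1; rfl; rfl; rfl; ring
    have := (hasDerivAt_const t0 a).div hden hg
    convert this using 1
    rfl; rfl; rfl
    rw [hgdef]; ring
  -- eventual equality along the parametrization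
  have hevB : (fun t => G (t, X t ξ0)) =ᶠ[nhds t0] (fun t => a / (1 + t * a / 2)) := by
    have hopen : IsOpen {t : ℝ | (t, ξ0) ∈ V} :=
      hV.preimage (continuous_id.prodMk continuous_const)
    filter_upwards [hopen.mem_nhds hqV] with t ht
    exact keyA t ξ0 ht
  have hB2' : HasDerivAt (fun t => G (t, X t ξ0)) (-(a^2/2)/g^2) t0 :=
    hB2.congr_of_eventuallyEq hevB
  have hDG : fderiv ℝ G p (1, w) = -(a^2/2)/g^2 := hB1.unique hB2'
  -- identify the pieces
  have hu_val : u p.1 p.2 = w := by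
    rw [hp1, hp2]
    exact huX (t0, ξ0) hqV
  have hd2val : d2 u p.1 p.2 = a / g := by
    rw [hp1, hp2, hd2 t0 (X t0 ξ0) (by rw [hpe]; exact hp)]
    exact keyA t0 ξ0 hqV
  have hd1d2 : d1 (d2 u) p.1 p.2 = fderiv ℝ G p (1, 0) := by
    have hev : (fun s => d2 u s p.2) =ᶠ[nhds p.1] (fun s => G (s, p.2)) := by
      have hopen : IsOpen {s : ℝ | (s, p.2) ∈ U} :=
        hUo.preimage (continuous_id.prodMk continuous_const)
      have hmem : p.1 ∈ {s : ℝ | (s, p.2) ∈ U} := by simpa using hp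
      filter_upwards [hopen.mem_nhds hmem] with s hs
      exact hd2 s p.2 hs
    have h1 : d1 (d2 u) p.1 p.2 = deriv (fun s => G (s, p.2)) p.1 := hev.deriv_eq
    rw [h1, deriv1_eq G p.1 p.2 (by simpa using hGdiff p hp)]
  have hd2d2 : d2 (d2 u) p.1 p.2 = fderiv ℝ G p (0, 1) := by
    have hev : (fun s => d2 u p.1 s) =ᶠ[nhds p.2] (fun s => G (p.1, s)) := by
      have hopen : IsOpen {s : ℝ | (p.1, s) ∈ U} :=
        hUo.preimage (continuous_const.prodMk continuous_id)
      have hmem : p.2 ∈ {s : ℝ | (p.1, s) ∈ U} := by simpa using hp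
      filter_upwards [hopen.mem_nhds hmem] with s hs
      exact hd2 p.1 s hs
    have h1 : d2 (d2 u) p.1 p.2 = deriv (fun s => G (p.1, s)) p.2 := hev.deriv_eq
    rw [h1, deriv2_eq G p.1 p.2 (by simpa using hGdiff p hp)]
  -- linearity of fderiv
  have hlin : fderiv ℝ G p (1, w) = fderiv ℝ G p (1, 0) + w * fderiv ℝ G p (0, 1) := by
    have hsm : ((1:ℝ), w) = ((1:ℝ), (0:ℝ)) + w • ((0:ℝ), (1:ℝ)) := by
      simp [Prod.ext_iff]
    rw [hsm, map_add, map_smul, smul_eq_mul]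
  -- conclude
  rw [hd1d2, hd2d2, hd2val, hu_val]
  have hkey : fderiv ℝ G p (1, 0) + w * fderiv ℝ G p (0, 1) = -(a^2/2)/g^2 := by
    rw [← hlin, hDG]
  rw [show fderiv ℝ G p (1, 0) + w * fderiv ℝ G p (0, 1) + (1/2) * (a/g)^2
      = (fderiv ℝ G p (1, 0) + w * fderiv ℝ G p (0, 1)) + (1/2) * (a/g)^2 by ring,
    hkey]
  field_simp
  ring
end

section
/- Let U := {(t,x) ∈ ℝ² : t ≠ 0 and t³ + 3tx + 1 > 0} and define u : U → ℝ by u(t,x) := (1 + 2tx − (t³ + 3tx + 1)^{2/3}) / t², where the power is the real power of a positive real number. Then u is a smooth solution of the Hunter–Saxton equation on U: u_{tx} + u·u_{xx} + (1/2)u_x² = 0 for all (t,x) ∈ U. -/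
open Real Topology

-- helper lemmas
-- derivative of g in x
lemma gx_deriv (t x : ℝ) : HasDerivAt (fun y : ℝ => t^3 + 3*t*y + 1) (3*t) x := by
  have h := (((hasDerivAt_id x).const_mul (3*t)).const_add (t^3)).add_const 1
  simpa using h

-- derivative of g in t
lemma gt_deriv (x t : ℝ) : HasDerivAt (fun s : ℝ => s^3 + 3*s*x + 1) (3*t^2 + 3*x) t := by
  have h := ((hasDerivAt_pow 3 t).add (((hasDerivAt_id t).const_mul 3).mul_const x)).add_const 1
  refine h.congr_deriv ?_
  push_cast; ring

-- x-derivative of f t ·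
lemma hux (t x : ℝ) (hg : t^3 + 3*t*x + 1 ≠ 0) :
    HasDerivAt (fun y => (1 + 2*t*y - (t^3 + 3*t*y + 1) ^ ((2:ℝ)/3)) / t^2)
      ((2*t - 2*t*(t^3+3*t*x+1)^(-(1:ℝ)/3))/t^2) x := by
  have h2 := (gx_deriv t x).rpow_const (p := (2:ℝ)/3) (Or.inl hg)
  have h3 := ((((hasDerivAt_id x).const_mul (2*t)).const_add 1).sub h2).div_const (t^2)
  refine h3.congr_deriv ?_
  have e : (t^3+3*t*x+1)^((2:ℝ)/3 - 1) = (t^3+3*t*x+1)^(-(1:ℝ)/3) := by norm_num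
  rw [e]; ring

-- x-derivative of the ux-formula
lemma huxx (t x : ℝ) (hg : t^3 + 3*t*x + 1 ≠ 0) :
    HasDerivAt (fun y => (2*t - 2*t*(t^3+3*t*y+1)^(-(1:ℝ)/3))/t^2)
      ((2*t^2*(t^3+3*t*x+1)^(-(1:ℝ)/3-1))/t^2) x := by
  have h2 := (gx_deriv t x).rpow_const (p := -(1:ℝ)/3) (Or.inl hg)
  have h3 := ((h2.const_mul (2*t)).const_sub (2*t)).div_const (t^2)
  refine h3.congr_deriv ?_
  ring

-- t-derivative of the ux-formula
lemma hutx (t x : ℝ) (ht : t ≠ 0) (hg : t^3 + 3*t*x + 1 ≠ 0) :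
    HasDerivAt (fun s => (2*s - 2*s*(s^3+3*s*x+1)^(-(1:ℝ)/3))/s^2)
      (((2 - (2*(t^3+3*t*x+1)^(-(1:ℝ)/3)
          + 2*t*((3*t^2+3*x)*(-(1:ℝ)/3)*(t^3+3*t*x+1)^(-(1:ℝ)/3-1))))*t^2
        - (2*t - 2*t*(t^3+3*t*x+1)^(-(1:ℝ)/3))*(2*t))/t^4) t := by
  have h2 := (gt_deriv x t).rpow_const (p := -(1:ℝ)/3) (Or.inl hg)
  have hn : HasDerivAt (fun s => 2*s - 2*s*(s^3+3*s*x+1)^(-(1:ℝ)/3))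
      (2 - (2*(t^3+3*t*x+1)^(-(1:ℝ)/3)
        + 2*t*((3*t^2+3*x)*(-(1:ℝ)/3)*(t^3+3*t*x+1)^(-(1:ℝ)/3-1)))) t := by
    have hm := (((hasDerivAt_id t).const_mul 2).mul h2)
    have := (((hasDerivAt_id t).const_mul 2).sub hm)
    refine this.congr_deriv ?_
    simp only [id_eq]
    ring
  have hd := hn.div (hasDerivAt_pow 2 t) (pow_ne_zero 2 ht)
  refine hd.congr_deriv ?_
  push_cast
  ring

-- the key algebraic identity
lemma hs_algebra (t x A : ℝ) (ht : t ≠ 0) (hA : A ≠ 0) (hG : A^3 = t^3+3*t*x+1) :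
    ((2 - (2*A⁻¹ + 2*t*((3*t^2+3*x)*(-(1:ℝ)/3)*(A^4)⁻¹)))*t^2
        - (2*t - 2*t*A⁻¹)*(2*t))/t^4
      + (1 + 2*t*x - A^2)/t^2 * ((2*t^2*(A^4)⁻¹)/t^2)
      + (1/2) * ((2*t - 2*t*A⁻¹)/t^2)^2 = 0 := by
  field_simp
  linear_combination (-2) * hG

/-- The explicit function `u(t,x) = (1 + 2tx − (t³ + 3tx + 1)^{2/3})/t²` is a smooth
solution of the Hunter–Saxton equation on `U = {t ≠ 0, t³ + 3tx + 1 > 0}`. -/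
theorem hunterSaxton_explicit_solution
    (U : Set (ℝ × ℝ))
    (hUdef : U = {p : ℝ × ℝ | p.1 ≠ 0 ∧ p.1^3 + 3 * p.1 * p.2 + 1 > 0})
    (u : ℝ → ℝ → ℝ)
    (hdef : ∀ t x : ℝ,
      u t x = (1 + 2 * t * x - (t^3 + 3 * t * x + 1) ^ ((2 : ℝ)/3)) / t^2) :
    Smooth2On u U ∧ ∀ p ∈ U,
      d1 (d2 u) p.1 p.2 + u p.1 p.2 * d2 (d2 u) p.1 p.2 + (1/2) * (d2 u p.1 p.2)^2 = 0 := by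

  have hu : u = fun t x => (1 + 2*t*x - (t^3 + 3*t*x + 1) ^ ((2:ℝ)/3)) / t^2 := by
    funext t x; rw [hdef]
  subst hu
  subst hUdef
  constructor
  · intro p hp
    simp only [Set.mem_setOf_eq] at hp
    obtain ⟨ht, hg⟩ := hp
    have hgc : ContDiffAt ℝ ((⊤:ℕ∞) : WithTop ℕ∞) (fun p : ℝ × ℝ => p.1^3 + 3*p.1*p.2 + 1) p :=
      (((contDiff_fst.pow 3).add
        ((contDiff_const.mul contDiff_fst).mul contDiff_snd)).add contDiff_const).contDiffAt
    have h1 : ContDiffAt ℝ ((⊤:ℕ∞) : WithTop ℕ∞) (fun p : ℝ × ℝ => (p.1^3 + 3*p.1*p.2 + 1) ^ ((2:ℝ)/3)) p :=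
      by
        have hr : ContDiffAt ℝ ((⊤:ℕ∞) : WithTop ℕ∞) (fun y : ℝ => y ^ ((2:ℝ)/3)) (p.1^3 + 3*p.1*p.2 + 1) :=
          contDiffAt_rpow_const_of_ne (ne_of_gt hg)
        exact hr.comp p hgc
    have hnum : ContDiffAt ℝ ((⊤:ℕ∞) : WithTop ℕ∞)
        (fun p : ℝ × ℝ => 1 + 2*p.1*p.2 - (p.1^3 + 3*p.1*p.2 + 1) ^ ((2:ℝ)/3)) p :=
      ((contDiff_const.add
        ((contDiff_const.mul contDiff_fst).mul contDiff_snd)).contDiffAt.sub h1)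
    have hden : ContDiffAt ℝ ((⊤:ℕ∞) : WithTop ℕ∞) (fun p : ℝ × ℝ => p.1^2) p := (contDiff_fst.pow 2).contDiffAt
    exact (hnum.div hden (pow_ne_zero 2 ht)).contDiffWithinAt
  · rintro ⟨a, b⟩ hp
    simp only [Set.mem_setOf_eq] at hp
    obtain ⟨ht, hg⟩ := hp
    have hgne : a^3 + 3*a*b + 1 ≠ 0 := ne_of_gt hg
    set G : ℝ := a^3 + 3*a*b + 1 with hGdef
    set A : ℝ := G ^ ((1:ℝ)/3) with hAdef
    have hApos : 0 < A := rpow_pos_of_pos hg _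
    have e4 : A^3 = G := by
      rw [hAdef, ← rpow_natCast (G ^ ((1:ℝ)/3)) 3, ← rpow_mul hg.le]
      norm_num
    have e1 : G ^ ((2:ℝ)/3) = A^2 := by
      rw [hAdef, ← rpow_natCast (G ^ ((1:ℝ)/3)) 2, ← rpow_mul hg.le]
      norm_num
    have e2 : G ^ (-(1:ℝ)/3) = A⁻¹ := by
      rw [hAdef, ← rpow_neg_one (G ^ ((1:ℝ)/3)), ← rpow_mul hg.le]
      norm_num
    have e3 : G ^ (-(1:ℝ)/3 - 1) = (A^4)⁻¹ := by
      have h4 : A^4 = G ^ ((4:ℝ)/3) := by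
        rw [hAdef, ← rpow_natCast (G ^ ((1:ℝ)/3)) 4, ← rpow_mul hg.le]
        norm_num
      rw [h4, ← rpow_neg hg.le]
      norm_num
    have hc1 : ContinuousAt (fun y => a^3 + 3*a*y + 1) b := (gx_deriv a b).continuousAt
    have hEvx : ∀ᶠ y in 𝓝 b, 0 < a^3 + 3*a*y + 1 :=
      hc1.eventually_mem (isOpen_Ioi.mem_nhds hg)
    have hc2 : ContinuousAt (fun s => s^3 + 3*s*b + 1) a := (gt_deriv b a).continuousAt
    have hEvt : ∀ᶠ s in 𝓝 a, 0 < s^3 + 3*s*b + 1 :=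
      hc2.eventually_mem (isOpen_Ioi.mem_nhds hg)
    simp only [d1, d2]
    have t1 : deriv (fun y => (1 + 2*a*y - (a^3 + 3*a*y + 1) ^ ((2:ℝ)/3)) / a^2) b
        = (2*a - 2*a*G^(-(1:ℝ)/3))/a^2 := (hux a b hgne).deriv
    have hEq2 : (fun y => deriv (fun z => (1 + 2*a*z - (a^3 + 3*a*z + 1) ^ ((2:ℝ)/3)) / a^2) y)
        =ᶠ[𝓝 b] fun y => (2*a - 2*a*(a^3 + 3*a*y + 1)^(-(1:ℝ)/3))/a^2 :=
      hEvx.mono fun y hy => (hux a y (ne_of_gt hy)).deriv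
    have t2 : deriv (fun y => deriv (fun z => (1 + 2*a*z - (a^3 + 3*a*z + 1) ^ ((2:ℝ)/3)) / a^2) y) b
        = (2*a^2*G^(-(1:ℝ)/3 - 1))/a^2 := by
      rw [hEq2.deriv_eq]
      exact (huxx a b hgne).deriv
    have hEq1 : (fun s => deriv (fun y => (1 + 2*s*y - (s^3 + 3*s*y + 1) ^ ((2:ℝ)/3)) / s^2) b)
        =ᶠ[𝓝 a] fun s => (2*s - 2*s*(s^3 + 3*s*b + 1)^(-(1:ℝ)/3))/s^2 :=
      hEvt.mono fun s hs => (hux s b (ne_of_gt hs)).deriv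
    have t3 : deriv (fun s => deriv (fun y => (1 + 2*s*y - (s^3 + 3*s*y + 1) ^ ((2:ℝ)/3)) / s^2) b) a
        = ((2 - (2*G^(-(1:ℝ)/3) + 2*a*((3*a^2+3*b)*(-(1:ℝ)/3)*G^(-(1:ℝ)/3-1))))*a^2
            - (2*a - 2*a*G^(-(1:ℝ)/3))*(2*a))/a^4 := by
      rw [hEq1.deriv_eq]
      exact (hutx a b ht hgne).deriv
    rw [t1, t2, t3, e1, e2, e3]
    exact hs_algebra a b A ht hApos.ne' (by rw [e4])
end

section
/- Let U ⊆ ℝ² be open and let u : U → ℝ be a smooth solution of the Hunter–Saxton equation u_{tx} + u·u_{xx} + (1/2)u_x² = 0 on U. Define K(t,x) := u_{tt}(t,x) − u(t,x)²·u_{xx}(t,x) + u_t(t,x)·u_x(t,x). Then ∂K/∂x = 0 everywhere on U; i.e., the differential invariant K = u_{tt} − u²u_{xx} + u_t u_x is constant in x along every solution (the syzygy ∂̂_J(K) = 0 of the quotient with respect to the three-dimensional symmetry algebra spanned by ∂_x, t∂_x + ∂_u, t²∂_x + 2t∂_u). -/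
open Real

/-! ### Auxiliary machinery: directional partial derivatives of functions on `ℝ × ℝ` -/

/-- Directional derivative of `f : ℝ × ℝ → ℝ` in direction `v`, as a function. -/
noncomputable def pd (v : ℝ × ℝ) (f : ℝ × ℝ → ℝ) (q : ℝ × ℝ) : ℝ := fderiv ℝ f q v

lemma HS.two_le : (2 : WithTop ℕ∞) ≤ ((⊤ : ℕ∞) : WithTop ℕ∞) := WithTop.coe_le_coe.mpr le_top

lemma HS.one_le : (1 : WithTop ℕ∞) ≤ ((⊤ : ℕ∞) : WithTop ℕ∞) := WithTop.coe_le_coe.mpr le_top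

lemma pd_contDiffOn {U : Set (ℝ × ℝ)} (hU : IsOpen U) {f : ℝ × ℝ → ℝ}
    (hf : ContDiffOn ℝ (⊤ : ℕ∞) f U) (v : ℝ × ℝ) : ContDiffOn ℝ (⊤ : ℕ∞) (pd v f) U :=
  (ContinuousLinearMap.apply ℝ ℝ v).contDiff.comp_contDiffOn
    (hf.fderiv_of_isOpen hU (m := (⊤ : ℕ∞)) (by simp))

lemma cdDiff {U : Set (ℝ × ℝ)} (hU : IsOpen U) {f : ℝ × ℝ → ℝ}
    (hf : ContDiffOn ℝ (⊤ : ℕ∞) f U) {p : ℝ × ℝ} (hp : p ∈ U) : DifferentiableAt ℝ f p :=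
  (hf.contDiffAt (hU.mem_nhds hp)).differentiableAt (by simp)

/-- Schwarz symmetry of second directional derivatives. -/
lemma pd_comm {U : Set (ℝ × ℝ)} (hU : IsOpen U) {f : ℝ × ℝ → ℝ}
    (hf : ContDiffOn ℝ (⊤ : ℕ∞) f U) {p : ℝ × ℝ} (hp : p ∈ U) (v w : ℝ × ℝ) :
    pd w (pd v f) p = pd v (pd w f) p := by
  have hfa : ContDiffAt ℝ (⊤ : ℕ∞) f p := hf.contDiffAt (hU.mem_nhds hp)
  have hsymm : IsSymmSndFDerivAt ℝ f p := hfa.isSymmSndFDerivAt (by rw [minSmoothness_of_isRCLikeNormedField]; exact HS.two_le)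
  have hdf : DifferentiableAt ℝ (fderiv ℝ f) p :=
    (hfa.fderiv_right (m := (⊤ : ℕ∞)) (by simp)).differentiableAt (by simp)
  have key : ∀ z : ℝ × ℝ, fderiv ℝ (pd z f) p =
      (ContinuousLinearMap.apply ℝ ℝ z).comp (fderiv ℝ (fderiv ℝ f) p) := fun z =>
    (((ContinuousLinearMap.apply ℝ ℝ z).hasFDerivAt).comp p hdf.hasFDerivAt).fderiv
  show fderiv ℝ (pd v f) p w = fderiv ℝ (pd w f) p v
  rw [key, key]
  exact hsymm.eq w v

lemma pd_congr {U : Set (ℝ × ℝ)} (hU : IsOpen U) {a b : ℝ × ℝ → ℝ}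
    (heq : ∀ q ∈ U, a q = b q) {p : ℝ × ℝ} (hp : p ∈ U) (v : ℝ × ℝ) :
    pd v a p = pd v b p := by
  have hev : a =ᶠ[nhds p] b := by
    filter_upwards [hU.mem_nhds hp] with q hq using heq q hq
  rw [pd, pd, hev.fderiv_eq]

lemma pd_add {a b : ℝ × ℝ → ℝ} {p : ℝ × ℝ} (ha : DifferentiableAt ℝ a p)
    (hb : DifferentiableAt ℝ b p) (v : ℝ × ℝ) :
    pd v (fun q => a q + b q) p = pd v a p + pd v b p := by
  simp [pd, fderiv_fun_add ha hb]

lemma pd_sub {a b : ℝ × ℝ → ℝ} {p : ℝ × ℝ} (ha : DifferentiableAt ℝ a p)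
    (hb : DifferentiableAt ℝ b p) (v : ℝ × ℝ) :
    pd v (fun q => a q - b q) p = pd v a p - pd v b p := by
  simp [pd, fderiv_fun_sub ha hb]

lemma pd_neg {a : ℝ × ℝ → ℝ} {p : ℝ × ℝ} (v : ℝ × ℝ) :
    pd v (fun q => -a q) p = -pd v a p := by
  simp [pd, fderiv_neg]

lemma pd_mul {a b : ℝ × ℝ → ℝ} {p : ℝ × ℝ} (ha : DifferentiableAt ℝ a p)
    (hb : DifferentiableAt ℝ b p) (v : ℝ × ℝ) :
    pd v (fun q => a q * b q) p = pd v a p * b p + a p * pd v b p := by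
  simp only [pd, fderiv_fun_mul ha hb]
  simp only [ContinuousLinearMap.add_apply, ContinuousLinearMap.smul_apply, smul_eq_mul]
  ring

lemma pd_const_mul {a : ℝ × ℝ → ℝ} {p : ℝ × ℝ} (ha : DifferentiableAt ℝ a p) (c : ℝ) (v : ℝ × ℝ) :
    pd v (fun q => c * a q) p = c * pd v a p := by
  simp [pd, fderiv_const_mul ha c]

lemma pd_pow2 {a : ℝ × ℝ → ℝ} {p : ℝ × ℝ} (ha : DifferentiableAt ℝ a p) (v : ℝ × ℝ) :
    pd v (fun q => a q ^ 2) p = 2 * a p * pd v a p := by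
  have h2 : (fun q => a q ^ 2) = fun q => a q * a q := by funext q; ring
  rw [h2, pd_mul ha ha]; ring

/-- A slice derivative in the first variable equals the directional derivative. -/
lemma deriv_fst_eq_pd {f : ℝ × ℝ → ℝ} {t x : ℝ} (hf : DifferentiableAt ℝ f (t, x)) :
    deriv (fun s => f (s, x)) t = pd (1, 0) f (t, x) := by
  have h : HasDerivAt (fun s : ℝ => (s, x)) ((1 : ℝ), (0 : ℝ)) t :=
    (hasDerivAt_id t).prodMk (hasDerivAt_const t x)
  exact (hf.hasFDerivAt.comp_hasDerivAt t h).deriv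

lemma deriv_snd_eq_pd {f : ℝ × ℝ → ℝ} {t x : ℝ} (hf : DifferentiableAt ℝ f (t, x)) :
    deriv (fun s => f (t, s)) x = pd (0, 1) f (t, x) := by
  have h : HasDerivAt (fun s : ℝ => (t, s)) ((0 : ℝ), (1 : ℝ)) x :=
    (hasDerivAt_const x t).prodMk (hasDerivAt_id x)
  exact (hf.hasFDerivAt.comp_hasDerivAt x h).deriv

lemma d1_eq_pd {U : Set (ℝ × ℝ)} (hU : IsOpen U) (h : ℝ → ℝ → ℝ) (H : ℝ × ℝ → ℝ)
    (heq : ∀ q ∈ U, h q.1 q.2 = H q) {p : ℝ × ℝ} (hp : p ∈ U)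
    (hHp : DifferentiableAt ℝ H p) :
    d1 h p.1 p.2 = pd (1, 0) H p := by
  obtain ⟨t, x⟩ := p
  have hopen : IsOpen {s : ℝ | (s, x) ∈ U} := hU.preimage (by fun_prop)
  have hev : (fun s => h s x) =ᶠ[nhds t] fun s => H (s, x) := by
    filter_upwards [hopen.mem_nhds hp] with s hs using heq (s, x) hs
  show deriv (fun s => h s x) t = pd (1, 0) H (t, x)
  calc deriv (fun s => h s x) t = deriv (fun s => H (s, x)) t := hev.deriv_eq
    _ = pd (1, 0) H (t, x) := deriv_fst_eq_pd hHp

lemma d2_eq_pd {U : Set (ℝ × ℝ)} (hU : IsOpen U) (h : ℝ → ℝ → ℝ) (H : ℝ × ℝ → ℝ)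
    (heq : ∀ q ∈ U, h q.1 q.2 = H q) {p : ℝ × ℝ} (hp : p ∈ U)
    (hHp : DifferentiableAt ℝ H p) :
    d2 h p.1 p.2 = pd (0, 1) H p := by
  obtain ⟨t, x⟩ := p
  have hopen : IsOpen {s : ℝ | (t, s) ∈ U} := hU.preimage (by fun_prop)
  have hev : (fun s => h t s) =ᶠ[nhds x] fun s => H (t, s) := by
    filter_upwards [hopen.mem_nhds hp] with s hs using heq (t, s) hs
  show deriv (fun s => h t s) x = pd (0, 1) H (t, x)
  calc deriv (fun s => h t s) x = deriv (fun s => H (t, s)) x := hev.deriv_eq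
    _ = pd (0, 1) H (t, x) := deriv_snd_eq_pd hHp

/-- Along any smooth solution of the Hunter–Saxton equation, the differential invariant
`K = u_{tt} − u²u_{xx} + u_t u_x` is constant in `x`: the syzygy `∂̂_J(K) = 0`. -/
theorem hunterSaxton_invariant_K_constant_in_x
    (U : Set (ℝ × ℝ)) (hU : IsOpen U)
    (u : ℝ → ℝ → ℝ) (hu : Smooth2On u U)
    (hsol : ∀ p ∈ U,
      d1 (d2 u) p.1 p.2 + u p.1 p.2 * d2 (d2 u) p.1 p.2 + (1/2) * (d2 u p.1 p.2)^2 = 0)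
    (K : ℝ → ℝ → ℝ)
    (hK : ∀ t x : ℝ,
      K t x = d1 (d1 u) t x - (u t x)^2 * d2 (d2 u) t x + d1 u t x * d2 u t x) :
    ∀ p ∈ U, d2 K p.1 p.2 = 0 := by
  intro p hp
  set e1 : ℝ × ℝ := (1, 0) with he1
  set e2 : ℝ × ℝ := (0, 1) with he2
  set F : ℝ × ℝ → ℝ := fun q => u q.1 q.2 with hFdef
  have hFs : ContDiffOn ℝ (⊤ : ℕ∞) F U := hu
  -- smoothness of iterated partials
  have hg1 : ContDiffOn ℝ (⊤ : ℕ∞) (pd e1 F) U := pd_contDiffOn hU hFs e1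
  have hg2 : ContDiffOn ℝ (⊤ : ℕ∞) (pd e2 F) U := pd_contDiffOn hU hFs e2
  have hG11 : ContDiffOn ℝ (⊤ : ℕ∞) (pd e1 (pd e1 F)) U := pd_contDiffOn hU hg1 e1
  have hG12 : ContDiffOn ℝ (⊤ : ℕ∞) (pd e2 (pd e1 F)) U := pd_contDiffOn hU hg1 e2
  have hG21 : ContDiffOn ℝ (⊤ : ℕ∞) (pd e1 (pd e2 F)) U := pd_contDiffOn hU hg2 e1
  have hG22 : ContDiffOn ℝ (⊤ : ℕ∞) (pd e2 (pd e2 F)) U := pd_contDiffOn hU hg2 e2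
  have hG221 : ContDiffOn ℝ (⊤ : ℕ∞) (pd e1 (pd e2 (pd e2 F))) U := pd_contDiffOn hU hG22 e1
  have hG222 : ContDiffOn ℝ (⊤ : ℕ∞) (pd e2 (pd e2 (pd e2 F))) U := pd_contDiffOn hU hG22 e2
  -- translations of d1/d2 into pd, valid on all of U
  have hd1u : ∀ q ∈ U, d1 u q.1 q.2 = pd e1 F q := fun q hq =>
    d1_eq_pd hU u F (fun _ _ => rfl) hq (cdDiff hU hFs hq)
  have hd2u : ∀ q ∈ U, d2 u q.1 q.2 = pd e2 F q := fun q hq =>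
    d2_eq_pd hU u F (fun _ _ => rfl) hq (cdDiff hU hFs hq)
  have hd1d1 : ∀ q ∈ U, d1 (d1 u) q.1 q.2 = pd e1 (pd e1 F) q := fun q hq =>
    d1_eq_pd hU (d1 u) (pd e1 F) hd1u hq (cdDiff hU hg1 hq)
  have hd1d2 : ∀ q ∈ U, d1 (d2 u) q.1 q.2 = pd e1 (pd e2 F) q := fun q hq =>
    d1_eq_pd hU (d2 u) (pd e2 F) hd2u hq (cdDiff hU hg2 hq)
  have hd2d2 : ∀ q ∈ U, d2 (d2 u) q.1 q.2 = pd e2 (pd e2 F) q := fun q hq =>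
    d2_eq_pd hU (d2 u) (pd e2 F) hd2u hq (cdDiff hU hg2 hq)
  -- the PDE in pd form
  have hsol' : ∀ q ∈ U, pd e1 (pd e2 F) q
      = -(F q * pd e2 (pd e2 F) q + (1/2) * (pd e2 F q) ^ 2) := by
    intro q hq
    have h0 := hsol q hq
    rw [hd1d2 q hq, hd2u q hq, hd2d2 q hq] at h0
    have : F q = u q.1 q.2 := rfl
    rw [this]; linarith
  -- K in pd form on U
  have hKU : ∀ q ∈ U, K q.1 q.2
      = pd e1 (pd e1 F) q - F q ^ 2 * pd e2 (pd e2 F) q + pd e1 F q * pd e2 F q := by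
    intro q hq
    rw [hK q.1 q.2, hd1d1 q hq, hd2d2 q hq, hd1u q hq, hd2u q hq]
  -- smoothness of the combination
  have hCombo : ContDiffOn ℝ (⊤ : ℕ∞)
      (fun q => pd e1 (pd e1 F) q - F q ^ 2 * pd e2 (pd e2 F) q + pd e1 F q * pd e2 F q) U :=
    (hG11.sub ((hFs.pow 2).mul hG22)).add (hg1.mul hg2)
  -- rewrite the goal
  have hgoal : d2 K p.1 p.2 = pd e2
      (fun q => pd e1 (pd e1 F) q - F q ^ 2 * pd e2 (pd e2 F) q + pd e1 F q * pd e2 F q) p :=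
    d2_eq_pd hU K _ hKU hp (cdDiff hU hCombo hp)
  rw [hgoal]
  -- differentiability at p of all ingredients
  have dF := cdDiff hU hFs hp
  have dg1 := cdDiff hU hg1 hp
  have dg2 := cdDiff hU hg2 hp
  have dG11 := cdDiff hU hG11 hp
  have dG12 := cdDiff hU hG12 hp
  have dG21 := cdDiff hU hG21 hp
  have dG22 := cdDiff hU hG22 hp
  have dG221 := cdDiff hU hG221 hp
  have dG222 := cdDiff hU hG222 hp
  have dF2 : DifferentiableAt ℝ (fun q => F q ^ 2) p := dF.pow 2
  have dB : DifferentiableAt ℝ (fun q => F q ^ 2 * pd e2 (pd e2 F) q) p := dF2.mul dG22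
  have dC : DifferentiableAt ℝ (fun q => pd e1 F q * pd e2 F q) p := dg1.mul dg2
  -- notation for the values at p
  set a : ℝ := F p with ha
  set b : ℝ := pd e1 F p with hb
  set c : ℝ := pd e2 F p with hc
  set G : ℝ := pd e2 (pd e2 F) p with hG
  set T : ℝ := pd e2 (pd e2 (pd e2 F)) p with hT
  -- expand the outer derivative
  rw [pd_add (dG11.fun_sub dB) dC e2, pd_sub dG11 dB e2, pd_mul dF2 dG22 e2, pd_pow2 dF e2,
    pd_mul dg1 dg2 e2]
  -- key mixed-derivative identities
  -- (1) pd e2 (pd e1 F) p = pd e1 (pd e2 F) p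
  have symF : ∀ q ∈ U, pd e2 (pd e1 F) q = pd e1 (pd e2 F) q := fun q hq =>
    pd_comm hU hFs hq e1 e2
  -- value of pd e1 (pd e2 F) at p from the PDE
  have hG21p : pd e1 (pd e2 F) p = -(a * G + (1/2) * c ^ 2) := hsol' p hp
  -- (2) the e2-derivative of the PDE right-hand side
  have dRHS : DifferentiableAt ℝ (fun q => -(F q * pd e2 (pd e2 F) q + (1/2) * (pd e2 F q) ^ 2)) p :=
    ((dF.mul dG22).add ((dg2.pow 2).const_mul (1/2:ℝ))).neg
  have hpd_e2_G21 : pd e2 (pd e1 (pd e2 F)) p = -(c * G + a * T + c * G) := by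
    have h1 : pd e2 (pd e1 (pd e2 F)) p
        = pd e2 (fun q => -(F q * pd e2 (pd e2 F) q + (1/2) * (pd e2 F q) ^ 2)) p :=
      pd_congr hU hsol' hp e2
    rw [h1, pd_neg, pd_add (dF.fun_mul dG22) ((dg2.fun_pow 2).const_mul (1/2:ℝ)) e2,
      pd_mul dF dG22 e2, pd_const_mul (dg2.fun_pow 2) (1/2:ℝ) e2, pd_pow2 dg2 e2]
    rw [← ha, ← hc, ← hG, ← hT]
    ring
  -- (3) pd e1 (pd e2 (pd e2 F)) p = pd e2 (pd e1 (pd e2 F)) p  (Schwarz for pd e2 F)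
  have hG221p : pd e1 (pd e2 (pd e2 F)) p = -(c * G + a * T + c * G) := by
    rw [pd_comm hU hg2 hp e2 e1]
    exact hpd_e2_G21
  -- (4) pd e1 of the PDE right-hand side
  have hpd_e1_G21 : pd e1 (pd e1 (pd e2 F)) p
      = -(b * G + a * (-(c * G + a * T + c * G)) + c * (-(a * G + (1/2) * c ^ 2))) := by
    have h1 : pd e1 (pd e1 (pd e2 F)) p
        = pd e1 (fun q => -(F q * pd e2 (pd e2 F) q + (1/2) * (pd e2 F q) ^ 2)) p :=
      pd_congr hU hsol' hp e1
    rw [h1, pd_neg, pd_add (dF.fun_mul dG22) ((dg2.fun_pow 2).const_mul (1/2:ℝ)) e1,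
      pd_mul dF dG22 e1, pd_const_mul (dg2.fun_pow 2) (1/2:ℝ) e1, pd_pow2 dg2 e1,
      hG221p, hG21p]
    rw [← ha, ← hb, ← hc, ← hG]
    ring
  -- (5) pd e2 (pd e1 (pd e1 F)) p = pd e1 (pd e1 (pd e2 F)) p
  have hG112 : pd e2 (pd e1 (pd e1 F)) p = pd e1 (pd e1 (pd e2 F)) p := by
    rw [pd_comm hU hg1 hp e1 e2]
    exact pd_congr hU (fun q hq => symF q hq) hp e1
  -- (6) pd e2 (pd e1 F) p = pd e1 (pd e2 F) p at p itself
  have hG12p : pd e2 (pd e1 F) p = -(a * G + (1/2) * c ^ 2) := by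
    rw [symF p hp]; exact hG21p
  -- put everything together
  rw [hG112, hpd_e1_G21, hG12p, ← ha, ← hb, ← hc, ← hG, ← hT]
  ring
end

section
/- Let α : ℝ → ℝ be smooth, let U ⊆ ℝ² be open, and let u : U → ℝ be a smooth solution of the generalized Hunter–Saxton type equation u_{tx} + u·u_{xx} + α(u_x) = 0 on U. Let W ⊆ ℝ² be an open set containing {(t, u_x(t,x)) : (t,x) ∈ U} and let h : W → ℝ be smooth with u_{xx}(t,x) = h(t, u_x(t,x)) for all (t,x) ∈ U. Then for every (t,x) ∈ U, writing J = u_x(t,x), one has ∂₁h(t,J) − α(J)·∂₂h(t,J) + (J + α'(J))·h(t,J) = 0. -/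
open Real

lemma hasDerivAt_d1 {f : ℝ → ℝ → ℝ} {a b : ℝ}
    (hf : DifferentiableAt ℝ (fun p : ℝ × ℝ => f p.1 p.2) (a, b)) :
    HasDerivAt (fun s => f s b) (d1 f a b) a := by
  have hc : HasDerivAt (fun s : ℝ => ((s, b) : ℝ × ℝ)) (1, 0) a :=
    HasDerivAt.prodMk (hasDerivAt_id a) (hasDerivAt_const a b)
  have h := hf.hasFDerivAt.comp_hasDerivAt a hc
  have hd : DifferentiableAt ℝ (fun s => f s b) a := h.differentiableAt
  exact hd.hasDerivAt

lemma hasDerivAt_d2_s10 {f : ℝ → ℝ → ℝ} {a b : ℝ}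
    (hf : DifferentiableAt ℝ (fun p : ℝ × ℝ => f p.1 p.2) (a, b)) :
    HasDerivAt (fun s => f a s) (d2 f a b) b := by
  have hc : HasDerivAt (fun s : ℝ => ((a, s) : ℝ × ℝ)) (0, 1) b :=
    HasDerivAt.prodMk (hasDerivAt_const b a) (hasDerivAt_id b)
  have h := hf.hasFDerivAt.comp_hasDerivAt b hc
  have hd : DifferentiableAt ℝ (fun s => f a s) b := h.differentiableAt
  exact hd.hasDerivAt

lemma d1_eq_fderiv {f : ℝ → ℝ → ℝ} {a b : ℝ}
    (hf : DifferentiableAt ℝ (fun p : ℝ × ℝ => f p.1 p.2) (a, b)) :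
    d1 f a b = fderiv ℝ (fun p : ℝ × ℝ => f p.1 p.2) (a, b) (1, 0) := by
  have hc : HasDerivAt (fun s : ℝ => ((s, b) : ℝ × ℝ)) (1, 0) a :=
    HasDerivAt.prodMk (hasDerivAt_id a) (hasDerivAt_const a b)
  exact (hf.hasFDerivAt.comp_hasDerivAt a hc).deriv

lemma d2_eq_fderiv {f : ℝ → ℝ → ℝ} {a b : ℝ}
    (hf : DifferentiableAt ℝ (fun p : ℝ × ℝ => f p.1 p.2) (a, b)) :
    d2 f a b = fderiv ℝ (fun p : ℝ × ℝ => f p.1 p.2) (a, b) (0, 1) := by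
  have hc : HasDerivAt (fun s : ℝ => ((a, s) : ℝ × ℝ)) (0, 1) b :=
    HasDerivAt.prodMk (hasDerivAt_const b a) (hasDerivAt_id b)
  exact (hf.hasFDerivAt.comp_hasDerivAt b hc).deriv

lemma diffAt_of_smooth2On {f : ℝ → ℝ → ℝ} {U : Set (ℝ × ℝ)} (hU : IsOpen U)
    (hf : Smooth2On f U) {p : ℝ × ℝ} (hp : p ∈ U) :
    DifferentiableAt ℝ (fun q : ℝ × ℝ => f q.1 q.2) p :=
  (hf.contDiffAt (hU.mem_nhds hp)).differentiableAt (by simp)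

lemma smooth2On_d1 {f : ℝ → ℝ → ℝ} {U : Set (ℝ × ℝ)} (hU : IsOpen U)
    (hf : Smooth2On f U) : Smooth2On (d1 f) U := by
  have h1 : ContDiffOn ℝ (⊤ : ℕ∞) (fderiv ℝ (fun q : ℝ × ℝ => f q.1 q.2)) U :=
    hf.fderiv_of_isOpen hU (by exact_mod_cast le_top)
  have h2 : ContDiffOn ℝ (⊤ : ℕ∞)
      (fun q : ℝ × ℝ => fderiv ℝ (fun q : ℝ × ℝ => f q.1 q.2) q (1, 0)) U :=
    h1.clm_apply contDiffOn_const
  exact h2.congr fun q hq => by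
    simpa using (d1_eq_fderiv (a := q.1) (b := q.2)
      (by simpa using diffAt_of_smooth2On hU hf hq))

lemma smooth2On_d2 {f : ℝ → ℝ → ℝ} {U : Set (ℝ × ℝ)} (hU : IsOpen U)
    (hf : Smooth2On f U) : Smooth2On (d2 f) U := by
  have h1 : ContDiffOn ℝ (⊤ : ℕ∞) (fderiv ℝ (fun q : ℝ × ℝ => f q.1 q.2)) U :=
    hf.fderiv_of_isOpen hU (by exact_mod_cast le_top)
  have h2 : ContDiffOn ℝ (⊤ : ℕ∞)
      (fun q : ℝ × ℝ => fderiv ℝ (fun q : ℝ × ℝ => f q.1 q.2) q (0, 1)) U :=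
    h1.clm_apply contDiffOn_const
  exact h2.congr fun q hq => by
    simpa using (d2_eq_fderiv (a := q.1) (b := q.2)
      (by simpa using diffAt_of_smooth2On hU hf hq))

lemma d1_d2_symm {f : ℝ → ℝ → ℝ} {U : Set (ℝ × ℝ)} (hU : IsOpen U)
    (hf : Smooth2On f U) {a b : ℝ} (hp : ((a, b) : ℝ × ℝ) ∈ U) :
    d1 (d2 f) a b = d2 (d1 f) a b := by
  set F := fun q : ℝ × ℝ => f q.1 q.2 with hF
  have hcF : ContDiffAt ℝ (⊤ : ℕ∞) F (a, b) := hf.contDiffAt (hU.mem_nhds hp)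
  have hsym : IsSymmSndFDerivAt ℝ F (a, b) :=
    hcF.isSymmSndFDerivAt (by rw [minSmoothness_of_isRCLikeNormedField]; exact WithTop.coe_le_coe.mpr le_top)
  have hG : DifferentiableAt ℝ (fderiv ℝ F) (a, b) :=
    (hcF.fderiv_right (m := (⊤:ℕ∞)) (by decide)).differentiableAt (by decide)
  -- first mixed partial
  have e1 : HasDerivAt (fun s => fderiv ℝ F (s, b))
      (fderiv ℝ (fderiv ℝ F) (a, b) (1, 0)) a :=
    hG.hasFDerivAt.comp_hasDerivAt a (HasDerivAt.prodMk (hasDerivAt_id a) (hasDerivAt_const a b))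
  have e1' : HasDerivAt (fun s => fderiv ℝ F (s, b) (0, 1))
      (fderiv ℝ (fderiv ℝ F) (a, b) (1, 0) (0, 1)) a := by
    simpa using e1.clm_apply (hasDerivAt_const a ((0 : ℝ), (1 : ℝ)))
  have hev1 : (fun s => d2 f s b) =ᶠ[nhds a] fun s => fderiv ℝ F (s, b) (0, 1) := by
    have hc : ContinuousAt (fun s : ℝ => ((s, b) : ℝ × ℝ)) a := by fun_prop
    filter_upwards [hc.preimage_mem_nhds (hU.mem_nhds hp)] with s hs
    exact d2_eq_fderiv (diffAt_of_smooth2On hU hf hs)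
  have E1 : d1 (d2 f) a b = fderiv ℝ (fderiv ℝ F) (a, b) (1, 0) (0, 1) := by
    rw [d1, hev1.deriv_eq, e1'.deriv]
  -- second mixed partial
  have e2 : HasDerivAt (fun s => fderiv ℝ F (a, s))
      (fderiv ℝ (fderiv ℝ F) (a, b) (0, 1)) b :=
    hG.hasFDerivAt.comp_hasDerivAt b (HasDerivAt.prodMk (hasDerivAt_const b a) (hasDerivAt_id b))
  have e2' : HasDerivAt (fun s => fderiv ℝ F (a, s) (1, 0))
      (fderiv ℝ (fderiv ℝ F) (a, b) (0, 1) (1, 0)) b := by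
    simpa using e2.clm_apply (hasDerivAt_const b ((1 : ℝ), (0 : ℝ)))
  have hev2 : (fun s => d1 f a s) =ᶠ[nhds b] fun s => fderiv ℝ F (a, s) (1, 0) := by
    have hc : ContinuousAt (fun s : ℝ => ((a, s) : ℝ × ℝ)) b := by fun_prop
    filter_upwards [hc.preimage_mem_nhds (hU.mem_nhds hp)] with s hs
    exact d1_eq_fderiv (diffAt_of_smooth2On hU hf hs)
  have E2 : d2 (d1 f) a b = fderiv ℝ (fderiv ℝ F) (a, b) (0, 1) (1, 0) := by
    rw [d2, hev2.deriv_eq, e2'.deriv]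
  rw [E1, E2]; exact hsym _ _

/-- Quotient of the generalized Hunter–Saxton type equation
`u_{tx} + u·u_{xx} + α(u_x) = 0`: along a solution, a smooth `h` with
`u_{xx} = h(t, u_x)` satisfies `h_I − α(J) h_J + (J + α'(J)) h = 0` at `(t, u_x)`. -/
theorem generalized_hs_quotient
    (α : ℝ → ℝ) (hα : ContDiff ℝ (⊤ : ℕ∞) α)
    (U : Set (ℝ × ℝ)) (hU : IsOpen U)
    (u : ℝ → ℝ → ℝ) (hu : Smooth2On u U)
    (hsol : ∀ p ∈ U,
      d1 (d2 u) p.1 p.2 + u p.1 p.2 * d2 (d2 u) p.1 p.2 + α (d2 u p.1 p.2) = 0)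
    (W : Set (ℝ × ℝ)) (hW : IsOpen W)
    (hWsub : ∀ p ∈ U, (p.1, d2 u p.1 p.2) ∈ W)
    (h : ℝ → ℝ → ℝ) (hh : Smooth2On h W)
    (hcon : ∀ p ∈ U, d2 (d2 u) p.1 p.2 = h p.1 (d2 u p.1 p.2)) :
    ∀ p ∈ U,
      d1 h p.1 (d2 u p.1 p.2) - α (d2 u p.1 p.2) * d2 h p.1 (d2 u p.1 p.2)
        + (d2 u p.1 p.2 + deriv α (d2 u p.1 p.2)) * h p.1 (d2 u p.1 p.2) = 0 := by
  rintro ⟨t, x⟩ hp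
  simp only
  set J := d2 u t x with hJ
  have hu2 : Smooth2On (d2 u) U := smooth2On_d2 hU hu
  have hu22 : Smooth2On (d2 (d2 u)) U := smooth2On_d2 hU hu2
  have hu12 : Smooth2On (d1 (d2 u)) U := smooth2On_d1 hU hu2
  have hpW : ((t, J) : ℝ × ℝ) ∈ W := hWsub (t, x) hp
  have du : DifferentiableAt ℝ (fun q : ℝ × ℝ => u q.1 q.2) (t, x) :=
    diffAt_of_smooth2On hU hu hp
  have du2 : DifferentiableAt ℝ (fun q : ℝ × ℝ => d2 u q.1 q.2) (t, x) :=
    diffAt_of_smooth2On hU hu2 hp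
  have du22 : DifferentiableAt ℝ (fun q : ℝ × ℝ => d2 (d2 u) q.1 q.2) (t, x) :=
    diffAt_of_smooth2On hU hu22 hp
  have du12 : DifferentiableAt ℝ (fun q : ℝ × ℝ => d1 (d2 u) q.1 q.2) (t, x) :=
    diffAt_of_smooth2On hU hu12 hp
  have dh : DifferentiableAt ℝ (fun q : ℝ × ℝ => h q.1 q.2) (t, J) :=
    diffAt_of_smooth2On hW hh hpW
  have hmemx : ∀ᶠ s in nhds x, ((t, s) : ℝ × ℝ) ∈ U := by
    have hc : ContinuousAt (fun s : ℝ => ((t, s) : ℝ × ℝ)) x := by fun_prop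
    exact hc.preimage_mem_nhds (hU.mem_nhds hp)
  have hmemt : ∀ᶠ s in nhds t, ((s, x) : ℝ × ℝ) ∈ U := by
    have hc : ContinuousAt (fun s : ℝ => ((s, x) : ℝ × ℝ)) t := by fun_prop
    exact hc.preimage_mem_nhds (hU.mem_nhds hp)
  -- basic one-variable derivatives
  have hux : HasDerivAt (fun s => d2 u t s) (d2 (d2 u) t x) x := hasDerivAt_d2_s10 du2
  have hut : HasDerivAt (fun s => d2 u s x) (d1 (d2 u) t x) t := hasDerivAt_d1 du2
  have hhx : HasDerivAt (fun s => h t s) (d2 h t J) J := hasDerivAt_d2_s10 dh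
  -- E1 : u_xxx = h_J * u_xx
  have hevA : (fun s => d2 (d2 u) t s) =ᶠ[nhds x] fun s => h t (d2 u t s) := by
    filter_upwards [hmemx] with s hs
    exact hcon (t, s) hs
  have hrhs1 : HasDerivAt (fun s => h t (d2 u t s)) (d2 h t J * d2 (d2 u) t x) x :=
    hhx.comp x hux
  have E1 : d2 (d2 (d2 u)) t x = d2 h t J * d2 (d2 u) t x :=
    hevA.deriv_eq.trans hrhs1.deriv
  -- E2 : u_xxt = h_I + u_tx * h_J
  have hevB : (fun s => d2 (d2 u) s x) =ᶠ[nhds t] fun s => h s (d2 u s x) := by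
    filter_upwards [hmemt] with s hs
    exact hcon (s, x) hs
  have hc2 : HasDerivAt (fun s : ℝ => ((s, d2 u s x) : ℝ × ℝ)) (1, d1 (d2 u) t x) t :=
    HasDerivAt.prodMk (hasDerivAt_id t) hut
  have hrhs2 : HasDerivAt (fun s => h s (d2 u s x))
      (fderiv ℝ (fun q : ℝ × ℝ => h q.1 q.2) (t, J) (1, d1 (d2 u) t x)) t :=
    by have := dh.hasFDerivAt.comp_hasDerivAt t hc2; exact this
  have hval : fderiv ℝ (fun q : ℝ × ℝ => h q.1 q.2) (t, J) (1, d1 (d2 u) t x)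
      = d1 h t J + d1 (d2 u) t x * d2 h t J := by
    have hsplit : ((1 : ℝ), d1 (d2 u) t x)
        = ((1 : ℝ), (0 : ℝ)) + d1 (d2 u) t x • ((0 : ℝ), (1 : ℝ)) := by
      simp
    rw [hsplit, map_add, map_smul, smul_eq_mul, ← d1_eq_fderiv dh, ← d2_eq_fderiv dh]
  have E2 : d1 (d2 (d2 u)) t x = d1 h t J + d1 (d2 u) t x * d2 h t J := by
    have := hevB.deriv_eq.trans hrhs2.deriv
    rw [hval] at this
    exact this
  -- E3 : x-derivative of the PDE
  have hsol_ev : (fun s => d1 (d2 u) t s + u t s * d2 (d2 u) t s + α (d2 u t s))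
      =ᶠ[nhds x] fun _ => (0 : ℝ) := by
    filter_upwards [hmemx] with s hs
    exact hsol (t, s) hs
  have h1 : HasDerivAt (fun s => d1 (d2 u) t s) (d2 (d1 (d2 u)) t x) x :=
    hasDerivAt_d2_s10 du12
  have h2 : HasDerivAt (fun s => u t s) (d2 u t x) x := hasDerivAt_d2_s10 du
  have h3 : HasDerivAt (fun s => d2 (d2 u) t s) (d2 (d2 (d2 u)) t x) x :=
    hasDerivAt_d2_s10 du22
  have hα' : HasDerivAt α (deriv α J) J :=
    ((hα.differentiable (by decide)) J).hasDerivAt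
  have h4 : HasDerivAt (fun s => α (d2 u t s)) (deriv α J * d2 (d2 u) t x) x :=
    hα'.comp x hux
  have htot : HasDerivAt (fun s => d1 (d2 u) t s + u t s * d2 (d2 u) t s + α (d2 u t s))
      (d2 (d1 (d2 u)) t x + (d2 u t x * d2 (d2 u) t x + u t x * d2 (d2 (d2 u)) t x)
        + deriv α J * d2 (d2 u) t x) x :=
    (h1.add (h2.mul h3)).add h4
  have E3 : d2 (d1 (d2 u)) t x + (d2 u t x * d2 (d2 u) t x + u t x * d2 (d2 (d2 u)) t x)
      + deriv α J * d2 (d2 u) t x = 0 := by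
    have := htot.deriv.symm.trans hsol_ev.deriv_eq
    simpa using this
  -- E4 : symmetry of mixed partials
  have E4 : d2 (d1 (d2 u)) t x = d1 (d2 (d2 u)) t x := (d1_d2_symm hU hu2 hp).symm
  have E5 : d1 (d2 u) t x + u t x * d2 (d2 u) t x + α J = 0 := hsol (t, x) hp
  have hc0 : d2 (d2 u) t x = h t J := hcon (t, x) hp
  linear_combination (-1 : ℝ) * E2 + (-1 : ℝ) * E4 + E3 + (-(u t x)) * E1
    + (-(d2 h t J)) * E5 + (-(J + deriv α J)) * hc0
end

section
/- Let α : ℝ → ℝ be smooth and nowhere vanishing, and let Q, P : ℝ → ℝ be smooth functions with Q'(J) = 1/α(J) and P'(J) = (J + α'(J))/α(J) for all J. Let g : ℝ → ℝ be smooth and nowhere vanishing. Define h(I,J) := e^{P(J)} / g(Q(J) + I) on ℝ². Then h solves the quotient equation ∂_I h(I,J) − α(J)·∂_J h(I,J) + (J + α'(J))·h(I,J) = 0 for all (I,J) ∈ ℝ². -/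
open Real

/-- General solution of the quotient equation `h_I − α(J) h_J + (J + α'(J)) h = 0` of
`u_{tx} + u·u_{xx} + α(u_x) = 0`: with `Q' = 1/α` and `P' = (J + α')/α`, the function
`h(I,J) = e^{P(J)}/g(Q(J) + I)` is a solution for any smooth nowhere-vanishing `g`. -/
theorem generalized_hs_quotient_solution
    (α : ℝ → ℝ) (hα : ContDiff ℝ (⊤ : ℕ∞) α) (hα0 : ∀ J : ℝ, α J ≠ 0)
    (Q P : ℝ → ℝ)
    (hQs : ContDiff ℝ (⊤ : ℕ∞) Q) (hPs : ContDiff ℝ (⊤ : ℕ∞) P)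
    (hQ : ∀ J : ℝ, HasDerivAt Q (1 / α J) J)
    (hP : ∀ J : ℝ, HasDerivAt P ((J + deriv α J) / α J) J)
    (g : ℝ → ℝ) (hg : ContDiff ℝ (⊤ : ℕ∞) g) (hg0 : ∀ x : ℝ, g x ≠ 0)
    (h : ℝ → ℝ → ℝ)
    (hdef : ∀ I J : ℝ, h I J = Real.exp (P J) / g (Q J + I)) :
    ∀ I J : ℝ,
      d1 h I J - α J * d2 h I J + (J + deriv α J) * h I J = 0 := by
  intro I J
  have hgd : ∀ x, HasDerivAt g (deriv g x) x := fun x =>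
    (hg.differentiable (by norm_num) x).hasDerivAt
  -- d1
  have hden1 : HasDerivAt (fun s => g (Q J + s)) (deriv g (Q J + I) * 1) I :=
    (hgd (Q J + I)).comp I ((hasDerivAt_id I).const_add (Q J))
  have h1 : HasDerivAt (fun s => h s J)
      ((0 * g (Q J + I) - Real.exp (P J) * (deriv g (Q J + I) * 1)) / (g (Q J + I)) ^ 2) I := by
    have := (hasDerivAt_const I (Real.exp (P J))).div hden1 (hg0 _)
    simpa only [hdef, Pi.div_def] using this
  -- d2
  have hnum2 : HasDerivAt (fun s => Real.exp (P s))
      (Real.exp (P J) * ((J + deriv α J) / α J)) J := (hP J).exp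
  have hden2 : HasDerivAt (fun s => g (Q s + I))
      (deriv g (Q J + I) * (1 / α J)) J :=
    (hgd (Q J + I)).comp J ((hQ J).add_const I)
  have h2 : HasDerivAt (fun s => h I s)
      ((Real.exp (P J) * ((J + deriv α J) / α J) * g (Q J + I) -
        Real.exp (P J) * (deriv g (Q J + I) * (1 / α J))) / (g (Q J + I)) ^ 2) J := by
    have := hnum2.div hden2 (hg0 _)
    simpa only [hdef, Pi.div_def] using this
  have e1 : d1 h I J = _ := h1.deriv
  have e2 : d2 h I J = _ := h2.deriv
  rw [e1, e2, hdef]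
  have hA := hα0 J
  have hG := hg0 (Q J + I)
  field_simp
  ring
end

section
/- Let α₁, α₂ : ℝ → ℝ be smooth, let A : ℝ → ℝ satisfy A'(x) = α₂(x), set P(x) := e^{A(x)}, let Q : ℝ → ℝ satisfy Q'(x) = α₁(x)·P(x), and let C : ℝ → ℝ be smooth. On the open set U := {(t,x) ∈ ℝ² : C(t) − Q(x) ≠ 0}, define u(t,x) := 2·P(x)/(C(t) − Q(x)). Then u is a smooth solution on U of the equation u_{tx} = u_t·(α₁(x)·u + α₂(x)). -/
open Real

/-- Example 3.2: with `A' = α₂`, `P = e^A`, `Q' = α₁·P`, the function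
`u(t,x) = 2P(x)/(C(t) − Q(x))` is a smooth solution of `u_{tx} = u_t(α₁(x)u + α₂(x))`
on `U = {C(t) − Q(x) ≠ 0}`. -/
theorem riccati_family_solution
    (α₁ α₂ : ℝ → ℝ)
    (hα₁ : ContDiff ℝ (⊤ : ℕ∞) α₁) (hα₂ : ContDiff ℝ (⊤ : ℕ∞) α₂)
    (A : ℝ → ℝ) (hA : ∀ x : ℝ, HasDerivAt A (α₂ x) x)
    (P : ℝ → ℝ) (hP : ∀ x : ℝ, P x = Real.exp (A x))
    (Q : ℝ → ℝ) (hQ : ∀ x : ℝ, HasDerivAt Q (α₁ x * P x) x)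
    (C : ℝ → ℝ) (hC : ContDiff ℝ (⊤ : ℕ∞) C)
    (U : Set (ℝ × ℝ)) (hUdef : U = {p : ℝ × ℝ | C p.1 - Q p.2 ≠ 0})
    (u : ℝ → ℝ → ℝ)
    (hdef : ∀ t x : ℝ, u t x = 2 * P x / (C t - Q x)) :
    Smooth2On u U ∧ ∀ p ∈ U,
      d1 (d2 u) p.1 p.2 = d1 u p.1 p.2 * (α₁ p.2 * u p.1 p.2 + α₂ p.2) := by
  have hPfun : P = fun s => Real.exp (A s) := funext hP
  have hAsm : ContDiff ℝ (⊤ : ℕ∞) A := by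
    rw [contDiff_infty_iff_deriv]
    refine ⟨fun x => (hA x).differentiableAt, ?_⟩
    have : deriv A = α₂ := funext fun x => (hA x).deriv
    rw [this]; exact hα₂
  have hPsm : ContDiff ℝ (⊤ : ℕ∞) P := by
    rw [hPfun]; exact Real.contDiff_exp.comp hAsm
  have hQsm : ContDiff ℝ (⊤ : ℕ∞) Q := by
    rw [contDiff_infty_iff_deriv]
    refine ⟨fun x => (hQ x).differentiableAt, ?_⟩
    have : deriv Q = fun x => α₁ x * P x := funext fun x => (hQ x).deriv
    rw [this]; exact hα₁.mul hPsm
  constructor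
  · unfold Smooth2On
    have heq : (fun p : ℝ × ℝ => u p.1 p.2) = fun p : ℝ × ℝ => 2 * P p.2 / (C p.1 - Q p.2) := by
      funext p; exact hdef p.1 p.2
    rw [heq]
    apply ContDiffOn.div
    · exact (contDiff_const.mul (hPsm.comp contDiff_snd)).contDiffOn
    · exact ((hC.comp contDiff_fst).sub (hQsm.comp contDiff_snd)).contDiffOn
    · intro p hp; rw [hUdef] at hp; exact hp
  · rintro ⟨t, x⟩ hp
    rw [hUdef] at hp
    have hD : C t - Q x ≠ 0 := hp
    have hCd : ∀ s : ℝ, HasDerivAt C (deriv C s) s :=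
      fun s => (hC.differentiable (by simp) s).hasDerivAt
    set c := deriv C t with hc
    have hP' : HasDerivAt P (α₂ x * P x) x := by
      have h := (hA x).exp
      rw [hP x, mul_comm, hPfun]
      exact h
    -- value of d2 u at points (s, x) with nonzero denominator
    have key2 : ∀ s : ℝ, C s - Q x ≠ 0 →
        d2 u s x = (2 * (α₂ x * P x) * (C s - Q x) + 2 * P x * (α₁ x * P x)) / (C s - Q x) ^ 2 := by
      intro s hs
      have hnum : HasDerivAt (fun y => 2 * P y) (2 * (α₂ x * P x)) x := hP'.const_mul 2
      have hden : HasDerivAt (fun y => C s - Q y) (-(α₁ x * P x)) x := (hQ x).const_sub (C s)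
      have hdiv := hnum.div hden hs
      have heq : (fun y => u s y) = fun y => 2 * P y / (C s - Q y) := funext fun y => hdef s y
      unfold d2
      rw [heq, HasDerivAt.deriv (f := fun y => 2 * P y / (C s - Q y)) hdiv]
      ring
    have hcont : Continuous fun s => C s - Q x := (hC.continuous).sub continuous_const
    have hopen : IsOpen {s : ℝ | C s - Q x ≠ 0} := isOpen_compl_singleton.preimage hcont
    have hev : (fun s => d2 u s x) =ᶠ[nhds t]
        (fun s => (2 * (α₂ x * P x) * (C s - Q x) + 2 * P x * (α₁ x * P x)) / (C s - Q x) ^ 2) := by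
      filter_upwards [hopen.mem_nhds hD] with s hs using key2 s hs
    have hn : HasDerivAt (fun s => 2 * (α₂ x * P x) * (C s - Q x) + 2 * P x * (α₁ x * P x))
        (2 * (α₂ x * P x) * c) t := by
      exact (((hCd t).sub_const (Q x)).const_mul _).add_const _
    have hd : HasDerivAt (fun s => (C s - Q x) ^ 2) (2 * (C t - Q x) * c) t := by
      have := ((hCd t).sub_const (Q x)).pow 2
      convert this using 1
      all_goals (try rfl)
      ring
    have hden2 : (C t - Q x) ^ 2 ≠ 0 := pow_ne_zero _ hD
    have hF := hn.div hd hden2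
    have hd1d2 : d1 (d2 u) t x =
        (2 * (α₂ x * P x) * c * (C t - Q x) ^ 2
          - (2 * (α₂ x * P x) * (C t - Q x) + 2 * P x * (α₁ x * P x)) * (2 * (C t - Q x) * c))
          / ((C t - Q x) ^ 2) ^ 2 := by
      unfold d1
      rw [hev.deriv_eq, HasDerivAt.deriv (f := fun s => (2 * (α₂ x * P x) * (C s - Q x) + 2 * P x * (α₁ x * P x)) / (C s - Q x) ^ 2) hF]
    have hu1fun : (fun s => u s x) = fun s => 2 * P x / (C s - Q x) := funext fun s => hdef s x
    have hu1 := (hasDerivAt_const t (2 * P x)).div ((hCd t).sub_const (Q x)) hD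
    have hd1 : d1 u t x = (0 * (C t - Q x) - 2 * P x * c) / (C t - Q x) ^ 2 := by
      unfold d1
      rw [hu1fun, HasDerivAt.deriv (f := fun s => 2 * P x / (C s - Q x)) hu1]
    rw [hd1d2, hd1, hdef t x]
    field_simp
    ring
end

section
/- Let C, G : ℝ → ℝ be smooth and let U := {(t,x) ∈ ℝ² : C(t) − G(x) > 0}. Define u : U → ℝ by u(t,x) := −ln(C(t) − G(x)). Then u is a smooth solution of the equation u_{tx} = u_t·u_x on U. -/
open Real

/-- Example 3.3: `u(t,x) = −ln(C(t) − G(x))` is a smooth solution of `u_{tx} = u_t·u_x`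
on `U = {C(t) − G(x) > 0}`. -/
theorem utx_eq_ut_ux_solution
    (C G : ℝ → ℝ)
    (hC : ContDiff ℝ (⊤ : ℕ∞) C) (hG : ContDiff ℝ (⊤ : ℕ∞) G)
    (U : Set (ℝ × ℝ)) (hUdef : U = {p : ℝ × ℝ | C p.1 - G p.2 > 0})
    (u : ℝ → ℝ → ℝ)
    (hdef : ∀ t x : ℝ, u t x = -Real.log (C t - G x)) :
    Smooth2On u U ∧ ∀ p ∈ U,
      d1 (d2 u) p.1 p.2 = d1 u p.1 p.2 * d2 u p.1 p.2 := by
  have hCd : Differentiable ℝ C := hC.differentiable (by simp)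
  have hGd : Differentiable ℝ G := hG.differentiable (by simp)
  -- d2 formula at points where C t - G x ≠ 0
  have hd2 : ∀ t x : ℝ, C t - G x ≠ 0 → d2 u t x = deriv G x / (C t - G x) := by
    intro t x hne
    have h1 : HasDerivAt (fun r => C t - G r) (-deriv G x) x := by
      simpa using ((hGd x).hasDerivAt.const_sub (C t))
    have h2 : HasDerivAt (fun r => -Real.log (C t - G r))
        (deriv G x / (C t - G x)) x := by
      have := (h1.log hne).fun_neg
      simpa [neg_div] using this
    have h3 : HasDerivAt (fun r => u t r) (deriv G x / (C t - G x)) x := by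
      apply h2.congr_of_eventuallyEq
      filter_upwards with r using (hdef t r)
    exact h3.deriv
  -- d1 formula
  have hd1 : ∀ t x : ℝ, C t - G x ≠ 0 → d1 u t x = -deriv C t / (C t - G x) := by
    intro t x hne
    have h1 : HasDerivAt (fun s => C s - G x) (deriv C t) t := by
      simpa using ((hCd t).hasDerivAt.sub_const (G x))
    have h2 : HasDerivAt (fun s => -Real.log (C s - G x))
        (-deriv C t / (C t - G x)) t := by
      have := (h1.log hne).fun_neg
      simpa [neg_div] using this
    have h3 : HasDerivAt (fun s => u s x) (-deriv C t / (C t - G x)) t := by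
      apply h2.congr_of_eventuallyEq
      filter_upwards with s using (hdef s x)
    exact h3.deriv
  constructor
  · -- smoothness
    have hF : ContDiff ℝ (⊤ : ℕ∞) (fun p : ℝ × ℝ => C p.1 - G p.2) :=
      (hC.comp contDiff_fst).sub (hG.comp contDiff_snd)
    have : ContDiffOn ℝ (⊤ : ℕ∞) (fun p : ℝ × ℝ => -Real.log (C p.1 - G p.2)) U := by
      apply ContDiffOn.neg
      apply ContDiffOn.log hF.contDiffOn
      intro p hp
      rw [hUdef] at hp
      exact ne_of_gt hp
    exact this.congr (fun p _ => by simp [hdef])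
  · rintro ⟨t, x⟩ hp
    rw [hUdef] at hp
    simp only [Set.mem_setOf_eq] at hp
    have hne : C t - G x ≠ 0 := ne_of_gt hp
    -- d1 (d2 u) at (t,x)
    have hopen : ∀ᶠ s in nhds t, C s - G x > 0 := by
      have hc : Continuous fun s => C s - G x := (hCd.continuous).sub continuous_const
      have := hc.continuousAt (Ioi_mem_nhds hp)
      filter_upwards [this] with s hs using hs
    have heq : (fun s => d2 u s x) =ᶠ[nhds t] fun s => deriv G x / (C s - G x) := by
      filter_upwards [hopen] with s hs
      exact hd2 s x (ne_of_gt hs)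
    have h1 : HasDerivAt (fun s => (C s - G x)⁻¹)
        (-(deriv C t) / (C t - G x) ^ 2) t := by
      have hcs : HasDerivAt (fun s => C s - G x) (deriv C t) t := by
        simpa using ((hCd t).hasDerivAt.sub_const (G x))
      simpa [neg_div] using hcs.fun_inv hne
    have h2 : HasDerivAt (fun s => deriv G x / (C s - G x))
        (deriv G x * (-(deriv C t) / (C t - G x) ^ 2)) t := by
      simpa [div_eq_mul_inv] using h1.const_mul (deriv G x)
    have h3 : HasDerivAt (fun s => d2 u s x)
        (deriv G x * (-(deriv C t) / (C t - G x) ^ 2)) t :=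
      h2.congr_of_eventuallyEq heq
    have hLHS : d1 (d2 u) t x = deriv G x * (-(deriv C t) / (C t - G x) ^ 2) :=
      h3.deriv
    rw [hLHS, hd1 t x hne, hd2 t x hne]
    field_simp
end

section
/- Let α : ℝ⁴ → ℝ be smooth, let U ⊆ ℝ² be open, and let u : U → ℝ be a smooth solution of u_{tx} = u_t·α(x, u, u_x, u_{xx}) on U with u_t(t,x) ≠ 0 for all (t,x) ∈ U. Let W ⊆ ℝ² be an open set containing {(x, u(t,x)) : (t,x) ∈ U} and let g : W → ℝ be smooth with u_x(t,x) = g(x, u(t,x)) for all (t,x) ∈ U. Then for every (t,x) ∈ U, writing (I,J) = (x, u(t,x)), one has ∂₂g(I,J) = α(I, J, g(I,J), ∂₁g(I,J) + g(I,J)·∂₂g(I,J)). -/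
open Real

private lemma hasDerivAt_slice1 {F : ℝ × ℝ → ℝ} {L : ℝ × ℝ →L[ℝ] ℝ} {a b : ℝ}
    (h : HasFDerivAt F L (a, b)) : HasDerivAt (fun s => F (s, b)) (L (1, 0)) a := by
  have := h.comp_hasDerivAt a ((hasDerivAt_id a).prodMk (hasDerivAt_const a b))
  simpa [Function.comp_def] using this

private lemma hasDerivAt_slice2 {F : ℝ × ℝ → ℝ} {L : ℝ × ℝ →L[ℝ] ℝ} {a b : ℝ}
    (h : HasFDerivAt F L (a, b)) : HasDerivAt (fun s => F (a, s)) (L (0, 1)) b := by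
  have := h.comp_hasDerivAt b ((hasDerivAt_const b a).prodMk (hasDerivAt_id b))
  simpa [Function.comp_def] using this

/-- Quotient of `u_{tx} = u_t·α(x, u, u_x, u_{xx})` (symmetries `f(t)∂_t`): along a
solution with `u_t ≠ 0`, a smooth `g` with `u_x = g(x, u)` satisfies
`g_J = α(I, J, g, g_I + g·g_J)` at `(I,J) = (x, u)`. -/
theorem type3_quotient
    (α : ℝ → ℝ → ℝ → ℝ → ℝ)
    (hα : ContDiff ℝ (⊤ : ℕ∞)
      (fun q : ℝ × ℝ × ℝ × ℝ => α q.1 q.2.1 q.2.2.1 q.2.2.2))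
    (U : Set (ℝ × ℝ)) (hU : IsOpen U)
    (u : ℝ → ℝ → ℝ) (hu : Smooth2On u U)
    (hsol : ∀ p ∈ U,
      d1 (d2 u) p.1 p.2
        = d1 u p.1 p.2 * α p.2 (u p.1 p.2) (d2 u p.1 p.2) (d2 (d2 u) p.1 p.2))
    (hut : ∀ p ∈ U, d1 u p.1 p.2 ≠ 0)
    (W : Set (ℝ × ℝ)) (hW : IsOpen W)
    (hWsub : ∀ p ∈ U, (p.2, u p.1 p.2) ∈ W)
    (g : ℝ → ℝ → ℝ) (hg : Smooth2On g W)
    (hcon : ∀ p ∈ U, d2 u p.1 p.2 = g p.2 (u p.1 p.2)) :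
    ∀ p ∈ U,
      d2 g p.2 (u p.1 p.2)
        = α p.2 (u p.1 p.2) (g p.2 (u p.1 p.2))
            (d1 g p.2 (u p.1 p.2) + g p.2 (u p.1 p.2) * d2 g p.2 (u p.1 p.2)) := by
  rintro ⟨t, x⟩ hp
  simp only
  set A := u t x with hA
  -- differentiability of g at (x, A)
  have hgd : DifferentiableAt ℝ (fun q : ℝ × ℝ => g q.1 q.2) (x, A) :=
    (hg.differentiableOn (by simp)).differentiableAt (hW.mem_nhds (hWsub (t, x) hp))
  set L := fderiv ℝ (fun q : ℝ × ℝ => g q.1 q.2) (x, A) with hL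
  have hGL : HasFDerivAt (fun q : ℝ × ℝ => g q.1 q.2) L (x, A) := hgd.hasFDerivAt
  -- differentiability of u at (t, x)
  have hud : DifferentiableAt ℝ (fun q : ℝ × ℝ => u q.1 q.2) (t, x) :=
    (hu.differentiableOn (by simp)).differentiableAt (hU.mem_nhds hp)
  set M := fderiv ℝ (fun q : ℝ × ℝ => u q.1 q.2) (t, x) with hM
  have hUM : HasFDerivAt (fun q : ℝ × ℝ => u q.1 q.2) M (t, x) := hud.hasFDerivAt
  -- partial derivatives as HasDerivAt
  have hd1g : HasDerivAt (fun s => g s A) (L (1, 0)) x := hasDerivAt_slice1 hGL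
  have hd2g : HasDerivAt (fun s => g x s) (L (0, 1)) A := hasDerivAt_slice2 hGL
  have hd1u : HasDerivAt (fun s => u s x) (M (1, 0)) t := hasDerivAt_slice1 hUM
  have hd2u : HasDerivAt (fun s => u t s) (M (0, 1)) x := hasDerivAt_slice2 hUM
  have ed1g : d1 g x A = L (1, 0) := hd1g.deriv
  have ed2g : d2 g x A = L (0, 1) := hd2g.deriv
  have ed1u : d1 u t x = M (1, 0) := hd1u.deriv
  have ed2u : d2 u t x = M (0, 1) := hd2u.deriv
  -- u_x = g(x, u)
  have hux : M (0, 1) = g x A := by rw [← ed2u]; exact hcon (t, x) hp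
  -- d1 (d2 u) t x = g_J * u_t
  have hT : d1 (d2 u) t x = L (0, 1) * M (1, 0) := by
    have hev : (fun s => d2 u s x) =ᶠ[nhds t] (fun s => g x (u s x)) := by
      have h1 : ∀ᶠ s in nhds t, (s, x) ∈ U :=
        ContinuousAt.preimage_mem_nhds (Continuous.continuousAt (by fun_prop))
          (hU.mem_nhds hp)
      filter_upwards [h1] with s hs
      exact hcon (s, x) hs
    have hcomp : HasDerivAt (fun s => g x (u s x)) (L (0, 1) * M (1, 0)) t :=
      HasDerivAt.comp t (by simpa [hA] using hd2g) hd1u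
    calc d1 (d2 u) t x = deriv (fun s => g x (u s x)) t := hev.deriv_eq
      _ = L (0, 1) * M (1, 0) := hcomp.deriv
  -- d2 (d2 u) t x = g_I + g * g_J
  have hX : d2 (d2 u) t x = L (1, M (0, 1)) := by
    have hev : (fun s => d2 u t s) =ᶠ[nhds x] (fun s => g s (u t s)) := by
      have h1 : ∀ᶠ s in nhds x, (t, s) ∈ U :=
        ContinuousAt.preimage_mem_nhds (Continuous.continuousAt (by fun_prop))
          (hU.mem_nhds hp)
      filter_upwards [h1] with s hs
      exact hcon (t, s) hs
    have hφ : HasDerivAt (fun s => ((s, u t s) : ℝ × ℝ)) (1, M (0, 1)) x :=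
      (hasDerivAt_id x).prodMk hd2u
    have hcomp := hGL.comp_hasDerivAt x hφ
    calc d2 (d2 u) t x = deriv (fun s => g s (u t s)) x := hev.deriv_eq
      _ = L (1, M (0, 1)) := by simpa [Function.comp_def] using hcomp.deriv
  have hLsplit : L (1, M (0, 1)) = L (1, 0) + g x A * L (0, 1) := by
    have : ((1 : ℝ), M (0, 1)) = (1, 0) + M (0, 1) • ((0 : ℝ), (1 : ℝ)) := by
      simp [Prod.ext_iff]
    rw [this, map_add, map_smul, hux, smul_eq_mul]
  -- plug into the PDE and cancel u_t
  have hux2 : d2 u t x = g x A := hcon (t, x) hp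
  have hsol' := hsol (t, x) hp
  simp only at hsol'
  rw [hT, hX, ed1u, hux2, ← hA] at hsol'
  -- hsol' : L (0,1) * M (1,0) = M (1,0) * α x A (g x A) (L (1, M (0,1)))
  have hne : M (1, 0) ≠ 0 := by rw [← ed1u]; exact hut (t, x) hp
  rw [ed1g, ed2g, ← hLsplit]
  apply mul_left_cancel₀ hne
  linear_combination hsol'
end

section
/- Let U ⊆ ℝ² be open and let u : U → ℝ be smooth. Define H : U → ℝ by H(t,x) := u(t,x) + x·(u_x(t,x) − u_t(t,x)). Then u satisfies the second-order PDE −x²u_t² + 2x²u_t u_x − x²u_x² + 2xu·u_t − 2xu·u_x − x·u_{tt} + x·u_{tx} − u² + u_t = 0 on U if and only if H satisfies ∂H/∂t = H² on U. -/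
open Real

/-- The complicated second-order PDE
`−x²u_t² + 2x²u_tu_x − x²u_x² + 2xuu_t − 2xuu_x − xu_{tt} + xu_{tx} − u² + u_t = 0`
holds on `U` iff the invariant `H = u + x(u_x − u_t)` satisfies `H_t = H²` on `U`. -/
theorem complicated_pde_iff_H_riccati
    (U : Set (ℝ × ℝ)) (hU : IsOpen U)
    (u : ℝ → ℝ → ℝ) (hu : Smooth2On u U)
    (H : ℝ → ℝ → ℝ)
    (hH : ∀ t x : ℝ, H t x = u t x + x * (d2 u t x - d1 u t x)) :
    (∀ p ∈ U,
      -p.2^2 * (d1 u p.1 p.2)^2 + 2 * p.2^2 * d1 u p.1 p.2 * d2 u p.1 p.2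
        - p.2^2 * (d2 u p.1 p.2)^2 + 2 * p.2 * u p.1 p.2 * d1 u p.1 p.2
        - 2 * p.2 * u p.1 p.2 * d2 u p.1 p.2 - p.2 * d1 (d1 u) p.1 p.2
        + p.2 * d1 (d2 u) p.1 p.2 - (u p.1 p.2)^2 + d1 u p.1 p.2 = 0) ↔
    (∀ p ∈ U, d1 H p.1 p.2 = (H p.1 p.2)^2) := by
  set F : ℝ × ℝ → ℝ := fun p => u p.1 p.2 with hFdef
  have hF : ContDiffOn ℝ (⊤ : ℕ∞) F U := hu
  -- the two coordinate-direction derivatives of F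
  set g1 : ℝ × ℝ → ℝ := fun q => fderiv ℝ F q ((1:ℝ), (0:ℝ)) with hg1def
  set g2 : ℝ × ℝ → ℝ := fun q => fderiv ℝ F q ((0:ℝ), (1:ℝ)) with hg2def
  have hf' : ContDiffOn ℝ (⊤ : ℕ∞) (fun q => fderiv ℝ F q) U :=
    hF.fderiv_of_isOpen hU (by exact_mod_cast le_top)
  have hg1 : ContDiffOn ℝ (⊤ : ℕ∞) g1 U := hf'.clm_apply contDiffOn_const
  have hg2 : ContDiffOn ℝ (⊤ : ℕ∞) g2 U := hf'.clm_apply contDiffOn_const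
  -- d1 u = g1 and d2 u = g2 on U
  have line1 : ∀ (b s : ℝ), HasDerivAt (fun s : ℝ => (s, b)) ((1:ℝ), (0:ℝ)) s :=
    fun b s => HasDerivAt.prodMk (hasDerivAt_id s) (hasDerivAt_const s b)
  have line2 : ∀ (a s : ℝ), HasDerivAt (fun s : ℝ => (a, s)) ((0:ℝ), (1:ℝ)) s :=
    fun a s => HasDerivAt.prodMk (hasDerivAt_const s a) (hasDerivAt_id s)
  have hFd : ∀ q ∈ U, DifferentiableAt ℝ F q := fun q hq =>
    (hF.contDiffAt (hU.mem_nhds hq)).differentiableAt (by simp)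
  have e1 : ∀ q ∈ U, d1 u q.1 q.2 = g1 q := fun q hq =>
    by have h := ((hFd q hq).hasFDerivAt.comp_hasDerivAt q.1 (line1 q.2 q.1)).deriv; exact h
  have e2 : ∀ q ∈ U, d2 u q.1 q.2 = g2 q := fun q hq =>
    by have h := ((hFd q hq).hasFDerivAt.comp_hasDerivAt q.2 (line2 q.1 q.2)).deriv; exact h
  -- key: formula for d1 H on U
  have key : ∀ p ∈ U, d1 H p.1 p.2 =
      d1 u p.1 p.2 + p.2 * (d1 (d2 u) p.1 p.2 - d1 (d1 u) p.1 p.2) := by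
    rintro ⟨t, x⟩ hp
    -- the horizontal slice through (t,x) is eventually in U
    have hopen : IsOpen {s : ℝ | (s, x) ∈ U} :=
      hU.preimage (by continuity : Continuous fun s : ℝ => (s, x))
    have hev : ∀ᶠ s in nhds t, (s, x) ∈ U := hopen.mem_nhds hp
    -- derivatives of the slices of g1, g2
    have hd1 : DifferentiableAt ℝ (fun s => g1 (s, x)) t :=
      by have h := ((hg1.contDiffAt (hU.mem_nhds hp)).differentiableAt
        (by simp)).comp t ((line1 x t).differentiableAt); exact h
    have hd2 : DifferentiableAt ℝ (fun s => g2 (s, x)) t :=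
      by have h := ((hg2.contDiffAt (hU.mem_nhds hp)).differentiableAt
        (by simp)).comp t ((line1 x t).differentiableAt); exact h
    have ed2 : d1 (d2 u) t x = deriv (fun s => g2 (s, x)) t := by
      have hE : (fun s => d2 u s x) =ᶠ[nhds t] (fun s => g2 (s, x)) :=
        hev.mono fun s hs => e2 (s, x) hs
      simpa [d1] using hE.deriv_eq
    have ed1 : d1 (d1 u) t x = deriv (fun s => g1 (s, x)) t := by
      have hE : (fun s => d1 u s x) =ᶠ[nhds t] (fun s => g1 (s, x)) :=
        hev.mono fun s hs => e1 (s, x) hs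
      simpa [d1] using hE.deriv_eq
    have h1 : HasDerivAt (fun s => u s x) (g1 (t, x)) t :=
      by have h := (hFd (t, x) hp).hasFDerivAt.comp_hasDerivAt t (line1 x t); exact h
    have htot : HasDerivAt (fun s => u s x + x * (g2 (s, x) - g1 (s, x)))
        (g1 (t, x) + x * (deriv (fun s => g2 (s, x)) t - deriv (fun s => g1 (s, x)) t)) t :=
      h1.add ((hd2.hasDerivAt.sub hd1.hasDerivAt).const_mul x)
    have Heq : (fun s => H s x) =ᶠ[nhds t] fun s => u s x + x * (g2 (s, x) - g1 (s, x)) :=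
      hev.mono fun s hs => by simp only []; rw [hH s x, e1 (s, x) hs, e2 (s, x) hs]
    show deriv (fun s => H s x) t = _
    rw [Heq.deriv_eq, htot.deriv, e1 (t, x) hp, ed1, ed2]
  constructor
  · intro h p hp
    have hk := key p hp
    rw [hk, hH]
    linear_combination (h p hp)
  · intro h p hp
    have hk := key p hp
    have hh := h p hp
    rw [hk, hH] at hh
    linear_combination hh
end
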